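/- arXiv:1507.07460 — 2 statements merged into one kernel-verified Lean document; each statement's English description precedes it below -/
import Mathlib

section
/- Let A be a nonnegative weakly irreducible tensor of order m and dimension n. Then rho(A) = min over positive vectors x of max over circuits gamma in G_A of (prod_{i in gamma} (A x^{m-1})_i / x_i^{m-1})^{1/|gamma|}, and also rho(A) = max over positive vectors x of min over circuits gamma in G_A of (prod_{i in gamma} (A x^{m-1})_i / x_i^{m-1})^{1/|gamma|}. -/
open scoped BigOperators
open Finset

/-- The arc relation of the digraph `G_A` of an order-`m` dimension-`n` tensor `A`,
    whose entries are indexed by a head index and a tail of `m - 1` indices: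
    `(i, j)` is an arc when some entry `a_{i i_2 ... i_m} ≠ 0` has `j` among `i_2, ..., i_m`. -/
def tArc (m n : ℕ) (A : Fin n → (Fin (m - 1) → Fin n) → ℝ) (i j : Fin n) : Prop :=
  ∃ t : Fin (m - 1) → Fin n, A i t ≠ 0 ∧ j ∈ Set.range t

/-- A digraph (given by its arc relation) is strongly connected. -/
def StronglyConnected {n : ℕ} (arc : Fin n → Fin n → Prop) : Prop :=
  ∀ i j : Fin n, Relation.ReflTransGen arc i j

/-- `γ 0, γ 1, ..., γ p = γ 0` is a circuit (closed directed walk, loops allowed)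
    of length `p` in the digraph with arc relation `arc`. -/
def IsCircuit {n : ℕ} (arc : Fin n → Fin n → Prop) (p : ℕ) (γ : ℕ → Fin n) : Prop :=
  0 < p ∧ γ p = γ 0 ∧ ∀ j < p, arc (γ j) (γ (j + 1))

/-- `lam` is an eigenvalue of the order-`m` dimension-`n` real tensor `A`:
    there is a nonzero complex vector `x` with `A x^{m-1} = lam x^{[m-1]}`. -/
def IsEig (m n : ℕ) (A : Fin n → (Fin (m - 1) → Fin n) → ℝ) (lam : ℂ) : Prop :=
  ∃ x : Fin n → ℂ, x ≠ 0 ∧ ∀ i : Fin n,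
    ∑ t : Fin (m - 1) → Fin n, (A i t : ℂ) * ∏ j, x (t j) = lam * x i ^ (m - 1)

/-- The spectral radius of a tensor: the supremum of moduli of its eigenvalues. -/
noncomputable def specRad (m n : ℕ) (A : Fin n → (Fin (m - 1) → Fin n) → ℝ) : ℝ :=
  sSup {r : ℝ | ∃ lam : ℂ, IsEig m n A lam ∧ ‖lam‖ = r}

/-- The `i`-th slice sum `K_i = ∑_{i_2,...,i_m} a_{i i_2 ... i_m}`. -/
def sliceSum (m n : ℕ) (A : Fin n → (Fin (m - 1) → Fin n) → ℝ) (i : Fin n) : ℝ :=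
  ∑ t : Fin (m - 1) → Fin n, A i t

/-- `(A x^{m-1})_i = ∑_{i_2,...,i_m} a_{i i_2 ... i_m} x_{i_2} ⋯ x_{i_m}`. -/
def Ax (m n : ℕ) (A : Fin n → (Fin (m - 1) → Fin n) → ℝ) (x : Fin n → ℝ) (i : Fin n) : ℝ :=
  ∑ t : Fin (m - 1) → Fin n, A i t * ∏ j, x (t j)

section basic
variable (m n : ℕ) (A : Fin n → (Fin (m - 1) → Fin n) → ℝ) (x y : Fin n → ℝ)

lemma Ax_nonneg (hA : ∀ i t, 0 ≤ A i t) (hx : ∀ i, 0 ≤ x i) (i : Fin n) :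
    0 ≤ Ax m n A x i := by
  apply Finset.sum_nonneg
  intro t _
  exact mul_nonneg (hA i t) (Finset.prod_nonneg fun j _ => hx (t j))

lemma Ax_mono (hA : ∀ i t, 0 ≤ A i t) (hx : ∀ i, 0 ≤ x i) (hxy : ∀ i, x i ≤ y i)
    (i : Fin n) : Ax m n A x i ≤ Ax m n A y i := by
  apply Finset.sum_le_sum
  intro t _
  apply mul_le_mul_of_nonneg_left _ (hA i t)
  exact Finset.prod_le_prod (fun j _ => hx (t j)) (fun j _ => hxy (t j))

lemma Ax_smul (c : ℝ) (i : Fin n) :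
    Ax m n A (fun j => c * x j) i = c ^ (m - 1) * Ax m n A x i := by
  unfold Ax
  rw [Finset.mul_sum]
  congr 1; ext t
  rw [Finset.prod_mul_distrib, Finset.prod_const]
  simp [Finset.card_univ]
  ring

lemma Ax_continuous (i : Fin n) : Continuous fun x : Fin n → ℝ => Ax m n A x i := by
  unfold Ax
  apply continuous_finset_sum
  intro t _
  exact continuous_const.mul (continuous_finset_prod _ fun j _ => continuous_apply (t j))

lemma Ax_add_const (ε : ℝ) (i : Fin n) :
    Ax m n A x i + ε * (∑ j, x j) ^ (m - 1) =
      Ax m n (fun i t => A i t + ε) x i := by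
  have h : (∑ j, x j) ^ (m - 1) = ∑ t : Fin (m - 1) → Fin n, ∏ j, x (t j) := by
    rw [← Fin.prod_const (m - 1) (∑ j, x j), Finset.prod_univ_sum]
    simp
  unfold Ax
  rw [h, Finset.mul_sum, ← Finset.sum_add_distrib]
  congr 1; ext t
  ring

lemma Ax_le_sliceSum (hA : ∀ i t, 0 ≤ A i t) (hx : ∀ i, 0 ≤ x i) (hx1 : ∀ i, x i ≤ 1)
    (i : Fin n) : Ax m n A x i ≤ sliceSum m n A i := by
  unfold Ax sliceSum
  apply Finset.sum_le_sum
  intro t _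
  nth_rewrite 2 [← mul_one (A i t)]
  apply mul_le_mul_of_nonneg_left _ (hA i t)
  exact Finset.prod_le_one (fun j _ => hx (t j)) (fun j _ => hx1 (t j))

end basic



section util

lemma chain_of_rtg {α : Type*} [Inhabited α] {r : α → α → Prop} {a b : α}
    (h : Relation.ReflTransGen r a b) :
    ∃ (L : ℕ) (γ : ℕ → α), γ 0 = a ∧ γ L = b ∧ ∀ j < L, r (γ j) (γ (j + 1)) := by
  induction h with
  | refl => exact ⟨0, fun _ => a, rfl, rfl, by omega⟩
  | @tail b c hab hbc ih =>
    obtain ⟨L, γ, h0, hL, harc⟩ := ih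
    refine ⟨L + 1, fun j => if j ≤ L then γ j else c, by simp [h0], by simp, ?_⟩
    intro j hj
    rcases Nat.lt_or_ge j L with h' | h'
    · simpa [Nat.le_of_lt h', Nat.succ_le_of_lt h'] using harc j h'
    · have hjL : j = L := by omega
      subst hjL
      simpa [hL] using hbc

lemma cycle_of_fun {n : ℕ} (hn : 0 < n) (σ : Fin n → Fin n) :
    ∃ (i : Fin n) (k : ℕ), 0 < k ∧ σ^[k] i = i := by
  have hcard : Fintype.card (Fin n) < Fintype.card (Fin (n + 1)) := by simp
  obtain ⟨a, b, hab, heq⟩ :=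
    Fintype.exists_ne_map_eq_of_card_lt (fun j : Fin (n + 1) => σ^[(j : ℕ)] ⟨0, hn⟩) hcard
  rcases Ne.lt_or_gt hab with h | h
  · refine ⟨σ^[(a : ℕ)] ⟨0, hn⟩, (b : ℕ) - (a : ℕ), by omega, ?_⟩
    rw [← Function.iterate_add_apply, Nat.sub_add_cancel (le_of_lt h)]
    exact heq.symm
  · refine ⟨σ^[(b : ℕ)] ⟨0, hn⟩, (a : ℕ) - (b : ℕ), by omega, ?_⟩
    rw [← Function.iterate_add_apply, Nat.sub_add_cancel (le_of_lt h)]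
    exact heq

lemma telescope_prod (g : ℕ → ℝ) (hg : ∀ j, g j ≠ 0) (p : ℕ) :
    ∏ j ∈ Finset.range p, g (j + 1) / g j = g p / g 0 := by
  induction p with
  | zero => simp [div_self (hg 0)]
  | succ p ih =>
    rw [Finset.prod_range_succ, ih, div_mul_div_comm,
      mul_comm (g p), mul_div_mul_right _ _ (hg p)]

lemma pow_rpow_inv {a : ℝ} (ha : 0 ≤ a) {p : ℕ} (hp : p ≠ 0) :
    (a ^ p) ^ ((p : ℝ)⁻¹) = a := by
  rw [← Real.rpow_natCast a p, ← Real.rpow_mul ha]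
  rw [mul_inv_cancel₀ (by exact_mod_cast hp), Real.rpow_one]

lemma rpow_inv_le {a b : ℝ} {p : ℕ} (ha : 0 ≤ a) (hb : 0 ≤ b) (hp : p ≠ 0)
    (h : a ≤ b ^ p) : a ^ ((p : ℝ)⁻¹) ≤ b := by
  calc a ^ ((p : ℝ)⁻¹) ≤ (b ^ p) ^ ((p : ℝ)⁻¹) :=
        Real.rpow_le_rpow ha h (by positivity)
    _ = b := pow_rpow_inv hb hp

lemma le_rpow_inv {a b : ℝ} {p : ℕ} (ha : 0 ≤ a) (hb : 0 ≤ b) (hp : p ≠ 0)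
    (h : b ^ p ≤ a) : b ≤ a ^ ((p : ℝ)⁻¹) := by
  calc b = (b ^ p) ^ ((p : ℝ)⁻¹) := (pow_rpow_inv hb hp).symm
    _ ≤ a ^ ((p : ℝ)⁻¹) := Real.rpow_le_rpow (by positivity) h (by positivity)

end util

section posPF

lemma rpow_inv_pow {a : ℝ} (ha : 0 ≤ a) {p : ℕ} (hp : p ≠ 0) :
    (a ^ ((p : ℝ)⁻¹)) ^ p = a := by
  rw [← Real.rpow_natCast (a ^ ((p:ℝ)⁻¹)) p, ← Real.rpow_mul ha,
    inv_mul_cancel₀ (by exact_mod_cast hp), Real.rpow_one]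

variable {m n : ℕ} {B : Fin n → (Fin (m - 1) → Fin n) → ℝ}

lemma Ax_lt (hm1 : m - 1 ≠ 0) (hB : ∀ i t, 0 < B i t) {x y : Fin n → ℝ}
    (hx : ∀ i, 0 ≤ x i) (hxy : ∀ i, x i ≤ y i) {k : Fin n} (hk : x k < y k) (j : Fin n) :
    Ax m n B x j < Ax m n B y j := by
  apply Finset.sum_lt_sum
  · intro t _
    exact mul_le_mul_of_nonneg_left
      (Finset.prod_le_prod (fun i _ => hx (t i)) (fun i _ => hxy (t i))) (le_of_lt (hB j t))
  · refine ⟨fun _ => k, Finset.mem_univ _, ?_⟩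
    have h1 : ∏ i : Fin (m - 1), x k = x k ^ (m - 1) := by
      rw [Finset.prod_const]; simp
    have h2 : ∏ i : Fin (m - 1), y k = y k ^ (m - 1) := by
      rw [Finset.prod_const]; simp
    rw [h1, h2]
    exact mul_lt_mul_of_pos_left (pow_lt_pow_left₀ hk (hx k) hm1) (hB j _)

theorem pos_pf (hm : 2 ≤ m) (hn : 0 < n) (hB : ∀ i t, 0 < B i t) :
    ∃ (ρ : ℝ) (u : Fin n → ℝ), 0 < ρ ∧ (∀ i, 0 < u i) ∧ (∀ i, u i ≤ 1) ∧ (∃ i, u i = 1) ∧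
      ∀ i, Ax m n B u i = ρ * u i ^ (m - 1) := by
  have hm1 : m - 1 ≠ 0 := by omega
  have hne : (Finset.univ : Finset (Fin n)).Nonempty := ⟨⟨0, hn⟩, Finset.mem_univ _⟩
  set R : ℝ := Finset.univ.sup' hne (sliceSum m n B) with hR
  -- any admissible normalized pair has λ ≤ R
  have key_bound : ∀ (lam : ℝ) (x : Fin n → ℝ), (∀ i, 0 ≤ x i) → (∀ i, x i ≤ 1) →
      (∃ i, x i = 1) → (∀ i, lam * x i ^ (m - 1) ≤ Ax m n B x i) → lam ≤ R := by
    intro lam x hx0 hx1 ⟨i1, hi1⟩ hineq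
    have h := hineq i1
    rw [hi1, one_pow, mul_one] at h
    calc lam ≤ Ax m n B x i1 := h
      _ ≤ sliceSum m n B i1 := Ax_le_sliceSum m n B x (fun i t => le_of_lt (hB i t)) hx0 hx1 i1
      _ ≤ R := Finset.le_sup' _ (Finset.mem_univ i1)
  -- the admissible set
  set S : Set (ℝ × (Fin n → ℝ)) := {p | 0 ≤ p.1 ∧ p.1 ≤ R ∧ (∀ i, 0 ≤ p.2 i ∧ p.2 i ≤ 1) ∧
    (∃ i, p.2 i = 1) ∧ ∀ i, p.1 * p.2 i ^ (m - 1) ≤ Ax m n B p.2 i} with hS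
  haveI hne2 : Nonempty (Fin (m - 1) → Fin n) := ⟨fun _ => ⟨0, hn⟩⟩
  have slice_pos : ∀ i, 0 < sliceSum m n B i := by
    intro i
    apply Finset.sum_pos (fun t _ => hB i t)
    exact Finset.univ_nonempty
  set lam0 : ℝ := Finset.univ.inf' hne (sliceSum m n B) with hlam0
  have lam0_pos : 0 < lam0 := by
    rw [hlam0, Finset.lt_inf'_iff]
    exact fun i _ => slice_pos i
  have Ax_one : ∀ i, Ax m n B (fun _ => 1) i = sliceSum m n B i := by
    intro i; unfold Ax sliceSum; simp
  have hbase : ((lam0, fun _ => (1:ℝ)) : ℝ × (Fin n → ℝ)) ∈ S := by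
    have hbR : lam0 ≤ R :=
      le_trans (Finset.inf'_le _ (Finset.mem_univ (⟨0, hn⟩ : Fin n)))
        (Finset.le_sup' _ (Finset.mem_univ (⟨0, hn⟩ : Fin n)))
    have hbineq : ∀ i : Fin n, lam0 * (1:ℝ) ^ (m - 1) ≤ Ax m n B (fun _ => 1) i := by
      intro i
      rw [one_pow, mul_one, Ax_one]
      exact Finset.inf'_le _ (Finset.mem_univ i)
    exact ⟨le_of_lt lam0_pos, hbR, fun i => ⟨zero_le_one, le_refl _⟩, ⟨⟨0, hn⟩, rfl⟩,
      fun i => hbineq i⟩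
  -- S is compact
  have hScompact : IsCompact S := by
    have hsub : S ⊆ (Set.Icc 0 R) ×ˢ (Set.Icc (0 : Fin n → ℝ) 1) := by
      rintro ⟨lam, x⟩ ⟨h1, h2, h3, _, _⟩
      exact ⟨⟨h1, h2⟩, fun i => (h3 i).1, fun i => (h3 i).2⟩
    have hcomp : IsCompact ((Set.Icc (0:ℝ) R) ×ˢ (Set.Icc (0 : Fin n → ℝ) 1)) := by
      apply IsCompact.prod isCompact_Icc
      rw [← Set.pi_univ_Icc]
      exact isCompact_univ_pi fun i => isCompact_Icc
    apply hcomp.of_isClosed_subset _ hsub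
    have c1 : IsClosed {p : ℝ × (Fin n → ℝ) | 0 ≤ p.1} := isClosed_le continuous_const continuous_fst
    have c2 : IsClosed {p : ℝ × (Fin n → ℝ) | p.1 ≤ R} := isClosed_le continuous_fst continuous_const
    have c3 : IsClosed {p : ℝ × (Fin n → ℝ) | ∀ i, 0 ≤ p.2 i ∧ p.2 i ≤ 1} := by
      have : {p : ℝ × (Fin n → ℝ) | ∀ i, 0 ≤ p.2 i ∧ p.2 i ≤ 1} =
          ⋂ i, ({p : ℝ × (Fin n → ℝ) | 0 ≤ p.2 i} ∩ {p | p.2 i ≤ 1}) := by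
        ext p; simp [Set.mem_iInter, forall_and]
      rw [this]
      refine isClosed_iInter fun i => IsClosed.inter ?_ ?_
      · exact isClosed_le continuous_const ((continuous_apply i).comp continuous_snd)
      · exact isClosed_le ((continuous_apply i).comp continuous_snd) continuous_const
    have c4 : IsClosed {p : ℝ × (Fin n → ℝ) | ∃ i, p.2 i = 1} := by
      have : {p : ℝ × (Fin n → ℝ) | ∃ i, p.2 i = 1} = ⋃ i, {p : ℝ × (Fin n → ℝ) | p.2 i = 1} := by
        ext p; simp
      rw [this]
      exact isClosed_iUnion_of_finite fun i =>
        isClosed_eq ((continuous_apply i).comp continuous_snd) continuous_const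
    have c5 : IsClosed {p : ℝ × (Fin n → ℝ) | ∀ i, p.1 * p.2 i ^ (m - 1) ≤ Ax m n B p.2 i} := by
      have : {p : ℝ × (Fin n → ℝ) | ∀ i, p.1 * p.2 i ^ (m - 1) ≤ Ax m n B p.2 i} =
          ⋂ i, {p : ℝ × (Fin n → ℝ) | p.1 * p.2 i ^ (m - 1) ≤ Ax m n B p.2 i} := by
        ext p; simp [Set.mem_iInter]
      rw [this]
      refine isClosed_iInter fun i => isClosed_le ?_ ?_
      · exact continuous_fst.mul (((continuous_apply i).comp continuous_snd).pow _)
      · exact (Ax_continuous m n B i).comp continuous_snd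
    have : S = {p : ℝ × (Fin n → ℝ) | 0 ≤ p.1} ∩ ({p | p.1 ≤ R} ∩
        ({p | ∀ i, 0 ≤ p.2 i ∧ p.2 i ≤ 1} ∩ ({p | ∃ i, p.2 i = 1} ∩
          {p | ∀ i, p.1 * p.2 i ^ (m - 1) ≤ Ax m n B p.2 i}))) := by
      ext p
      simp only [hS, Set.mem_setOf_eq, Set.mem_inter_iff] <;> tauto
    rw [this]
    exact c1.inter (c2.inter (c3.inter (c4.inter c5)))
  obtain ⟨⟨ρ, u⟩, humem, hmax⟩ :=
    hScompact.exists_isMaxOn ⟨_, hbase⟩ continuous_fst.continuousOn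
  have hmax' : ∀ p ∈ S, p.1 ≤ ρ := fun p hp => hmax hp
  obtain ⟨hρ0, hρR, hu01, ⟨i1, hi1⟩, hineq⟩ := humem
  dsimp only at hρ0 hρR hu01 hineq hi1
  have hρpos : 0 < ρ := lt_of_lt_of_le lam0_pos (hmax' _ hbase)
  -- upgrade to a positive vector satisfying the inequality
  have Axu_pos : ∀ i, 0 < Ax m n B u i := by
    intro i
    apply Finset.sum_pos'
    · intro t _
      exact mul_nonneg (le_of_lt (hB i t)) (Finset.prod_nonneg fun j _ => (hu01 (t j)).1)
    · refine ⟨fun _ => i1, Finset.mem_univ _, ?_⟩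
      have : ∏ _j : Fin (m - 1), u i1 = 1 := by rw [Finset.prod_const, hi1, one_pow]
      rw [this, mul_one]
      exact hB i _
  set e : ℝ := ((m - 1 : ℕ) : ℝ)⁻¹ with he
  set z : Fin n → ℝ := fun i => (Ax m n B u i) ^ e with hz
  have hz_pos : ∀ i, 0 < z i := fun i => Real.rpow_pos_of_pos (Axu_pos i) e
  have hz_pow : ∀ i, z i ^ (m - 1) = Ax m n B u i :=
    fun i => rpow_inv_pow (le_of_lt (Axu_pos i)) hm1
  have hzu : ∀ i, ρ ^ e * u i ≤ z i := by
    intro i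
    have h1 : (ρ ^ e * u i) ^ (m - 1) ≤ z i ^ (m - 1) := by
      rw [mul_pow, rpow_inv_pow hρ0 hm1, hz_pow]
      exact hineq i
    exact le_of_pow_le_pow_left₀ hm1 (le_of_lt (hz_pos i)) h1
  have hAz : ∀ i, ρ * z i ^ (m - 1) ≤ Ax m n B z i := by
    intro i
    calc ρ * z i ^ (m - 1) = ρ * Ax m n B u i := by rw [hz_pow]
      _ = (ρ ^ e) ^ (m - 1) * Ax m n B u i := by rw [rpow_inv_pow hρ0 hm1]
      _ = Ax m n B (fun j => ρ ^ e * u j) i := (Ax_smul m n B u _ i).symm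
      _ ≤ Ax m n B z i := Ax_mono m n B _ z (fun i t => le_of_lt (hB i t))
          (fun j => mul_nonneg (Real.rpow_nonneg hρ0 e) (hu01 j).1) hzu i
  -- normalize z
  set M : ℝ := Finset.univ.sup' hne z with hM
  have hMz : ∀ i, z i ≤ M := fun i => Finset.le_sup' _ (Finset.mem_univ i)
  have hMpos : 0 < M := lt_of_lt_of_le (hz_pos ⟨0, hn⟩) (hMz ⟨0, hn⟩)
  obtain ⟨iM, _, hiM⟩ := Finset.exists_mem_eq_sup' hne z
  set y : Fin n → ℝ := fun i => M⁻¹ * z i with hy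
  have hy_pos : ∀ i, 0 < y i := fun i => mul_pos (inv_pos.mpr hMpos) (hz_pos i)
  have hy_le1 : ∀ i, y i ≤ 1 := by
    intro i
    rw [hy]
    calc M⁻¹ * z i ≤ M⁻¹ * M := by
          apply mul_le_mul_of_nonneg_left (hMz i) (le_of_lt (inv_pos.mpr hMpos))
      _ = 1 := inv_mul_cancel₀ (ne_of_gt hMpos)
  have hy_one : ∃ i, y i = 1 := ⟨iM, by rw [hy]; simp only; rw [← hiM, inv_mul_cancel₀ (ne_of_gt hMpos)]⟩
  have hAy : ∀ i, ρ * y i ^ (m - 1) ≤ Ax m n B y i := by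
    intro i
    have := Ax_smul m n B z M⁻¹ i
    rw [← hy] at this
    rw [this, hy]
    simp only
    rw [mul_pow]
    calc ρ * ((M⁻¹) ^ (m-1) * z i ^ (m-1)) = (M⁻¹)^(m-1) * (ρ * z i ^ (m-1)) := by ring
      _ ≤ (M⁻¹)^(m-1) * Ax m n B z i := by
          apply mul_le_mul_of_nonneg_left (hAz i) (by positivity)
  -- equality by maximality
  have heq : ∀ i, Ax m n B y i = ρ * y i ^ (m - 1) := by
    by_contra hcon
    push_neg at hcon
    obtain ⟨i0, hi0⟩ := hcon
    have hstrict : ρ * y i0 ^ (m - 1) < Ax m n B y i0 := lt_of_le_of_ne (hAy i0) (Ne.symm hi0)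
    -- choose ε
    have hcont : ContinuousAt (fun ε : ℝ => ρ * (y i0 + ε) ^ (m - 1)) 0 := by fun_prop
    have hval : (fun ε : ℝ => ρ * (y i0 + ε) ^ (m - 1)) 0 < Ax m n B y i0 := by
      simpa using hstrict
    have hev : ∀ᶠ ε in nhdsWithin (0:ℝ) (Set.Ioi 0),
        ρ * (y i0 + ε) ^ (m - 1) < Ax m n B y i0 := by
      have h2 : Filter.Tendsto (fun ε : ℝ => ρ * (y i0 + ε) ^ (m - 1))
          (nhdsWithin (0:ℝ) (Set.Ioi 0)) (nhds ((fun ε : ℝ => ρ * (y i0 + ε) ^ (m - 1)) 0)) :=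
        hcont.tendsto.mono_left nhdsWithin_le_nhds
      exact h2.eventually_lt_const hval
    obtain ⟨ε, hεlt, hεpos'⟩ := (hev.and self_mem_nhdsWithin).exists
    have hεpos : (0:ℝ) < ε := hεpos'
    set y' : Fin n → ℝ := fun j => if j = i0 then y i0 + ε else y j with hy'
    have hy'_ge : ∀ j, y j ≤ y' j := by
      intro j; rw [hy']; dsimp only
      split
      · next h => rw [h]; linarith
      · exact le_refl _
    have hy'_pos : ∀ j, 0 < y' j := fun j => lt_of_lt_of_le (hy_pos j) (hy'_ge j)
    have hy'_i0 : y i0 < y' i0 := by rw [hy']; simp; linarith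
    have hstrictall : ∀ j, ρ * y' j ^ (m - 1) < Ax m n B y' j := by
      intro j
      by_cases hj : j = i0
      · subst hj
        have h1 : Ax m n B y j ≤ Ax m n B y' j :=
          Ax_mono m n B y y' (fun i t => le_of_lt (hB i t)) (fun i => le_of_lt (hy_pos i)) hy'_ge j
        have h2 : y' j = y j + ε := by rw [hy']; simp
        rw [h2]
        exact lt_of_lt_of_le hεlt h1
      · have h1 : Ax m n B y j < Ax m n B y' j :=
          Ax_lt hm1 hB (fun i => le_of_lt (hy_pos i)) hy'_ge hy'_i0 j
        have h2 : y' j = y j := by rw [hy']; simp [hj]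
        rw [h2]
        exact lt_of_le_of_lt (hAy j) h1
    set lam' : ℝ := Finset.univ.inf' hne (fun j => Ax m n B y' j / y' j ^ (m - 1)) with hlam'
    have hlam'_gt : ρ < lam' := by
      rw [hlam', Finset.lt_inf'_iff]
      intro j _
      rw [lt_div_iff₀ (pow_pos (hy'_pos j) _)]
      calc ρ * y' j ^ (m-1) < Ax m n B y' j := hstrictall j
        _ = Ax m n B y' j := rfl
    have hlam'_ineq : ∀ j, lam' * y' j ^ (m - 1) ≤ Ax m n B y' j := by
      intro j
      have h1 : lam' ≤ Ax m n B y' j / y' j ^ (m - 1) :=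
        Finset.inf'_le _ (Finset.mem_univ j)
      rw [← le_div_iff₀ (pow_pos (hy'_pos j) _)]
      exact h1
    -- normalize y'
    set M' : ℝ := Finset.univ.sup' hne y' with hM'
    have hM'_ge : ∀ j, y' j ≤ M' := fun j => Finset.le_sup' _ (Finset.mem_univ j)
    have hM'_pos : 0 < M' := lt_of_lt_of_le (hy'_pos ⟨0, hn⟩) (hM'_ge ⟨0, hn⟩)
    obtain ⟨jM, _, hjM⟩ := Finset.exists_mem_eq_sup' hne y'
    set y'' : Fin n → ℝ := fun j => M'⁻¹ * y' j with hy''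
    have hy''_mem : ((lam', y'') : ℝ × (Fin n → ℝ)) ∈ S := by
      simp only [hS, Set.mem_setOf_eq]
      have h0 : ∀ j, 0 ≤ y'' j := fun j => le_of_lt (mul_pos (inv_pos.mpr hM'_pos) (hy'_pos j))
      have h1 : ∀ j, y'' j ≤ 1 := by
        intro j
        rw [hy'']
        calc M'⁻¹ * y' j ≤ M'⁻¹ * M' :=
              mul_le_mul_of_nonneg_left (hM'_ge j) (le_of_lt (inv_pos.mpr hM'_pos))
          _ = 1 := inv_mul_cancel₀ (ne_of_gt hM'_pos)
      have h2 : ∃ j, y'' j = 1 := ⟨jM, by rw [hy'']; simp only; rw [← hjM, inv_mul_cancel₀ (ne_of_gt hM'_pos)]⟩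
      have h3 : ∀ j, lam' * y'' j ^ (m - 1) ≤ Ax m n B y'' j := by
        intro j
        have := Ax_smul m n B y' M'⁻¹ j
        rw [← hy''] at this
        rw [this, hy'']
        simp only
        rw [mul_pow]
        calc lam' * ((M'⁻¹) ^ (m-1) * y' j ^ (m-1)) = (M'⁻¹)^(m-1) * (lam' * y' j ^ (m-1)) := by ring
          _ ≤ (M'⁻¹)^(m-1) * Ax m n B y' j := by
              apply mul_le_mul_of_nonneg_left (hlam'_ineq j) (by positivity)
      have h4 : lam' ≤ R := key_bound lam' y'' h0 h1 h2 h3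
      exact ⟨le_trans hρ0 (le_of_lt hlam'_gt), h4, fun j => ⟨h0 j, h1 j⟩, h2, h3⟩
    have hle : lam' ≤ ρ := hmax' _ hy''_mem
    linarith
  exact ⟨ρ, y, hρpos, hy_pos, hy_le1, hy_one, heq⟩

end posPF

section limitPF

variable {m n : ℕ}

lemma Ax_mono_entries (A B : Fin n → (Fin (m - 1) → Fin n) → ℝ)
    (hAB : ∀ i t, A i t ≤ B i t) (x : Fin n → ℝ) (hx : ∀ i, 0 ≤ x i) (i : Fin n) :
    Ax m n A x i ≤ Ax m n B x i := by
  apply Finset.sum_le_sum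
  intro t _
  exact mul_le_mul_of_nonneg_right (hAB i t) (Finset.prod_nonneg fun j _ => hx (t j))

theorem exists_pf (hm : 2 ≤ m) (hn : 0 < n)
    (A : Fin n → (Fin (m - 1) → Fin n) → ℝ) (hA : ∀ i t, 0 ≤ A i t)
    (hirr : StronglyConnected (tArc m n A)) (hNZ : ∃ i t, A i t ≠ 0) :
    ∃ (ρ : ℝ) (u : Fin n → ℝ), 0 ≤ ρ ∧ (∀ i, 0 < u i) ∧
      ∀ i, Ax m n A u i = ρ * u i ^ (m - 1) := by
  have hm1 : m - 1 ≠ 0 := by omega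
  haveI : Inhabited (Fin n) := ⟨⟨0, hn⟩⟩
  have hne : (Finset.univ : Finset (Fin n)).Nonempty := ⟨⟨0, hn⟩, Finset.mem_univ _⟩
  -- the perturbed tensors
  set B : ℕ → Fin n → (Fin (m - 1) → Fin n) → ℝ :=
    fun k i t => A i t + ((k : ℝ) + 1)⁻¹ with hB
  have hBpos : ∀ k i t, 0 < B k i t := by
    intro k i t
    have : (0:ℝ) < ((k : ℝ) + 1)⁻¹ := by positivity
    have := hA i t
    simp only [hB]
    linarith
  choose ρs us hρs_pos hus_pos hus_le1 hus_one heq using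
    fun k => pos_pf hm hn (hBpos k)
  -- uniform bound on ρs
  set R1 : ℝ := Finset.univ.sup' hne (sliceSum m n (B 0)) with hR1
  have hρs_le : ∀ k, ρs k ≤ R1 := by
    intro k
    obtain ⟨i1, hi1⟩ := hus_one k
    have h1 : ρs k = Ax m n (B k) (us k) i1 := by
      rw [heq k i1, hi1, one_pow, mul_one]
    have h2 : Ax m n (B k) (us k) i1 ≤ sliceSum m n (B k) i1 :=
      Ax_le_sliceSum m n (B k) (us k) (fun i t => (hBpos k i t).le)
        (fun i => (hus_pos k i).le) (hus_le1 k) i1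
    have h3 : sliceSum m n (B k) i1 ≤ sliceSum m n (B 0) i1 := by
      apply Finset.sum_le_sum
      intro t _
      simp only [hB]
      have : ((k : ℝ) + 1)⁻¹ ≤ ((0 : ℝ) + 1)⁻¹ := by
        apply inv_anti₀ (by norm_num)
        push_cast
        linarith [Nat.cast_nonneg (α := ℝ) k]
      push_cast
      linarith
    calc ρs k ≤ sliceSum m n (B 0) i1 := by rw [h1]; exact le_trans h2 h3
      _ ≤ R1 := Finset.le_sup' _ (Finset.mem_univ i1)
  -- uniform positive lower bound on coordinates of us
  obtain ⟨inz, tnz, hnz⟩ := hNZ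
  have hPne : (Finset.univ.filter
      (fun q : Fin n × (Fin (m - 1) → Fin n) => A q.1 q.2 ≠ 0)).Nonempty := by
    refine ⟨(inz, tnz), ?_⟩
    simp [hnz]
  set a0 : ℝ := (Finset.univ.filter
      (fun q : Fin n × (Fin (m - 1) → Fin n) => A q.1 q.2 ≠ 0)).inf' hPne
      (fun q => A q.1 q.2) with ha0
  have ha0_pos : 0 < a0 := by
    rw [ha0, Finset.lt_inf'_iff]
    rintro ⟨i, t⟩ hq
    simp only [Finset.mem_filter] at hq
    exact lt_of_le_of_ne (hA i t) (Ne.symm hq.2)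
  have ha0_le : ∀ i t, A i t ≠ 0 → a0 ≤ A i t := by
    intro i t h
    apply Finset.inf'_le (f := fun q : Fin n × (Fin (m - 1) → Fin n) => A q.1 q.2)
      (b := (i, t))
    simp [h]
  set C0 : ℝ := max (R1 / a0) 1 with hC0
  have hC0_ge1 : (1:ℝ) ≤ C0 := le_max_right _ _
  have hR1_pos : 0 < R1 := lt_of_lt_of_le (hρs_pos 0) (hρs_le 0)
  -- the growth sequence
  set c : ℕ → ℝ := fun j => Nat.rec (1:ℝ) (fun _ cj => C0 * cj ^ (m - 1)) j with hc
  have hc0 : c 0 = 1 := rfl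
  have hcs : ∀ j, c (j + 1) = C0 * c j ^ (m - 1) := fun j => rfl
  have hc_ge1 : ∀ j, 1 ≤ c j := by
    intro j
    induction j with
    | zero => rw [hc0]
    | succ j ih =>
      rw [hcs]
      have h2 : (1:ℝ) ≤ c j ^ (m - 1) := by
        calc (1:ℝ) = 1 ^ (m - 1) := (one_pow _).symm
          _ ≤ c j ^ (m - 1) := pow_le_pow_left₀ zero_le_one ih _
      nlinarith
  -- chains between all pairs
  choose L γpath hγ0 hγL hγarc using fun i j : Fin n => chain_of_rtg (hirr i j)
  have hPQne : ((Finset.univ : Finset (Fin n × Fin n))).Nonempty :=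
    ⟨(default, default), Finset.mem_univ _⟩
  set Cmax : ℝ := (Finset.univ : Finset (Fin n × Fin n)).sup' hPQne
    (fun q => c (L q.1 q.2)) with hCmax
  have hCmax_ge1 : (1:ℝ) ≤ Cmax := by
    refine le_trans (hc_ge1 (L default default)) ?_
    exact Finset.le_sup' (fun q : Fin n × Fin n => c (L q.1 q.2))
      (Finset.mem_univ ((default, default) : Fin n × Fin n))
  have hCmax_pos : 0 < Cmax := lt_of_lt_of_le one_pos hCmax_ge1
  -- uniform lower bound
  have hlow : ∀ k i, Cmax⁻¹ ≤ us k i := by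
    intro k i
    obtain ⟨v0, -, hv0⟩ := Finset.exists_mem_eq_inf' hne (us k)
    have hv0pos : 0 < us k v0 := hus_pos k v0
    have hμle : ∀ j, us k v0 ≤ us k j := fun j => hv0 ▸ Finset.inf'_le _ (Finset.mem_univ j)
    obtain ⟨i1, hi1⟩ := hus_one k
    have key : ∀ j, j ≤ L v0 i1 → us k (γpath v0 i1 j) ≤ c j * us k v0 := by
      intro j
      induction j with
      | zero =>
        intro _
        rw [hγ0, hc0, one_mul]
      | succ j ih =>
        intro hj1
        have hj : j ≤ L v0 i1 := by omega
        obtain ⟨t, htnz, l0, hl0⟩ := hγarc v0 i1 j (by omega)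
        have hprod : us k (γpath v0 i1 (j+1)) * us k v0 ^ (m - 2) ≤ ∏ l, us k (t l) := by
          rw [← hl0]
          rw [Finset.prod_eq_mul_prod_sdiff_singleton_of_mem (Finset.mem_univ l0)
            (fun l => us k (t l))]
          apply mul_le_mul_of_nonneg_left _ (hus_pos k (t l0)).le
          have hcard : (Finset.univ \ {l0}).card = m - 2 := by
            rw [Finset.card_sdiff_of_subset (by simp)]
            simp only [Finset.card_univ, Fintype.card_fin, Finset.card_singleton]
            omega
          calc us k v0 ^ (m - 2) = ∏ _l ∈ Finset.univ \ {l0}, us k v0 := by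
                rw [Finset.prod_const, hcard]
            _ ≤ ∏ l ∈ Finset.univ \ {l0}, us k (t l) :=
                Finset.prod_le_prod (fun _ _ => hv0pos.le) (fun l _ => hμle (t l))
        have hmain : a0 * (us k (γpath v0 i1 (j+1)) * us k v0 ^ (m - 2)) ≤
            R1 * (c j * us k v0) ^ (m - 1) := by
          have s1 : a0 * (us k (γpath v0 i1 (j+1)) * us k v0 ^ (m - 2)) ≤
              A (γpath v0 i1 j) t * ∏ l, us k (t l) := by
            apply mul_le_mul (ha0_le _ _ htnz) hprod
              (mul_nonneg (hus_pos k _).le (by positivity)) (hA _ t)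
          have s2 : A (γpath v0 i1 j) t * ∏ l, us k (t l) ≤ Ax m n A (us k) (γpath v0 i1 j) := by
            apply Finset.single_le_sum (f := fun t' => A (γpath v0 i1 j) t' * ∏ l, us k (t' l))
              _ (Finset.mem_univ t)
            intro t' _
            exact mul_nonneg (hA _ t') (Finset.prod_nonneg fun l _ => (hus_pos k (t' l)).le)
          have s3 : Ax m n A (us k) (γpath v0 i1 j) ≤ Ax m n (B k) (us k) (γpath v0 i1 j) := by
            apply Ax_mono_entries A (B k) _ (us k) (fun i => (hus_pos k i).le)
            intro i t'
            simp only [hB]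
            have : (0:ℝ) < ((k : ℝ) + 1)⁻¹ := by positivity
            linarith
          have s4 : Ax m n (B k) (us k) (γpath v0 i1 j) = ρs k * us k (γpath v0 i1 j) ^ (m - 1) :=
            heq k _
          have s5 : ρs k * us k (γpath v0 i1 j) ^ (m - 1) ≤ R1 * (c j * us k v0) ^ (m - 1) := by
            apply mul_le_mul (hρs_le k) _ (pow_nonneg (hus_pos k _).le _) hR1_pos.le
            exact pow_le_pow_left₀ (hus_pos k _).le (ih hj) _
          linarith
        have hsplit : (c j * us k v0) ^ (m - 1) = c j ^ (m - 1) * (us k v0 ^ (m - 2) * us k v0) := by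
          rw [mul_pow]
          congr 1
          rw [← pow_succ]
          congr 1
          omega
        rw [hcs]
        -- from hmain : a0 * (X * us k v0 ^{m-2}) ≤ R1 * c_j^{m-1} * us k v0 ^{m-2} * μ
        set X : ℝ := us k (γpath v0 i1 (j+1)) with hX
        rw [hsplit] at hmain
        have hXle : X ≤ (R1 / a0) * c j ^ (m - 1) * us k v0 := by
          rw [div_mul_eq_mul_div, div_mul_eq_mul_div, le_div_iff₀ ha0_pos]
          have hμm2 : 0 < us k v0 ^ (m - 2) := by positivity
          nlinarith [hmain, hμm2]
        calc X ≤ (R1 / a0) * c j ^ (m - 1) * us k v0 := hXle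
          _ ≤ C0 * c j ^ (m - 1) * us k v0 := by
              apply mul_le_mul_of_nonneg_right _ hv0pos.le
              apply mul_le_mul_of_nonneg_right (le_max_left _ _)
              exact pow_nonneg (le_trans zero_le_one (hc_ge1 j)) _
          _ = C0 * c j ^ (m - 1) * us k v0 := rfl
    have hend : (1:ℝ) ≤ Cmax * us k v0 := by
      have h1 := key (L v0 i1) (le_refl _)
      rw [hγL, hi1] at h1
      calc (1:ℝ) ≤ c (L v0 i1) * us k v0 := h1
        _ ≤ Cmax * us k v0 := by
            apply mul_le_mul_of_nonneg_right _ hv0pos.le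
            exact Finset.le_sup' (fun q : Fin n × Fin n => c (L q.1 q.2))
              (Finset.mem_univ (v0, i1))
    have h2 : Cmax⁻¹ ≤ us k v0 := by
      rw [← one_div, div_le_iff₀ hCmax_pos]
      nlinarith
    exact le_trans h2 (hμle i)
  -- compactness and limits
  set K : Set (ℝ × (Fin n → ℝ)) := (Set.Icc 0 R1) ×ˢ (Set.Icc (0 : Fin n → ℝ) 1) with hK
  have hKcomp : IsCompact K := by
    apply IsCompact.prod isCompact_Icc
    rw [← Set.pi_univ_Icc]
    exact isCompact_univ_pi fun i => isCompact_Icc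
  have hmem : ∀ k, ((ρs k, us k) : ℝ × (Fin n → ℝ)) ∈ K := by
    intro k
    exact ⟨⟨(hρs_pos k).le, hρs_le k⟩, fun i => (hus_pos k i).le, fun i => hus_le1 k i⟩
  obtain ⟨⟨ρ, u⟩, -, φ, hφmono, hφtend⟩ := hKcomp.tendsto_subseq hmem
  have hρtend : Filter.Tendsto (fun k => ρs (φ k)) Filter.atTop (nhds ρ) :=
    (continuous_fst.tendsto _).comp hφtend
  have hutendfun : Filter.Tendsto (fun k => us (φ k)) Filter.atTop (nhds u) :=
    (continuous_snd.tendsto _).comp hφtend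
  have hutend : ∀ i, Filter.Tendsto (fun k => us (φ k) i) Filter.atTop (nhds (u i)) :=
    fun i => ((continuous_apply i).tendsto _).comp hutendfun
  have hρ0 : 0 ≤ ρ := ge_of_tendsto' hρtend (fun k => (hρs_pos (φ k)).le)
  have hu_pos : ∀ i, 0 < u i := by
    intro i
    have := ge_of_tendsto' (hutend i) (fun k => hlow (φ k) i)
    exact lt_of_lt_of_le (inv_pos.mpr hCmax_pos) this
  have hfinal : ∀ i, Ax m n A u i = ρ * u i ^ (m - 1) := by
    intro i
    have hEqk : ∀ k, Ax m n A (us (φ k)) i + ((φ k : ℝ) + 1)⁻¹ * (∑ j, us (φ k) j) ^ (m - 1) =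
        ρs (φ k) * us (φ k) i ^ (m - 1) := by
      intro k
      rw [Ax_add_const]
      exact heq (φ k) i
    have hT1 : Filter.Tendsto (fun k => Ax m n A (us (φ k)) i) Filter.atTop
        (nhds (Ax m n A u i)) := ((Ax_continuous m n A i).tendsto u).comp hutendfun
    have hεtend : Filter.Tendsto (fun k => ((φ k : ℝ) + 1)⁻¹) Filter.atTop (nhds 0) := by
      apply Filter.Tendsto.comp tendsto_inv_atTop_zero
      apply Filter.tendsto_atTop_add_const_right
      exact tendsto_natCast_atTop_atTop.comp hφmono.tendsto_atTop
    have hTsum : Filter.Tendsto (fun k => (∑ j, us (φ k) j) ^ (m - 1)) Filter.atTop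
        (nhds ((∑ j, u j) ^ (m - 1))) := by
      have hcont : Continuous (fun x : Fin n → ℝ => (∑ j, x j) ^ (m - 1)) :=
        (continuous_finset_sum _ fun j _ => continuous_apply j).pow _
      exact (hcont.tendsto u).comp hutendfun
    have hLHS : Filter.Tendsto
        (fun k => Ax m n A (us (φ k)) i + ((φ k : ℝ) + 1)⁻¹ * (∑ j, us (φ k) j) ^ (m - 1))
        Filter.atTop (nhds (Ax m n A u i)) := by
      have := hT1.add (hεtend.mul hTsum)
      simpa using this
    have hRHS : Filter.Tendsto (fun k => ρs (φ k) * us (φ k) i ^ (m - 1)) Filter.atTop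
        (nhds (ρ * u i ^ (m - 1))) := hρtend.mul ((hutend i).pow _)
    have hfun : (fun k => Ax m n A (us (φ k)) i + ((φ k : ℝ) + 1)⁻¹ *
        (∑ j, us (φ k) j) ^ (m - 1)) = fun k => ρs (φ k) * us (φ k) i ^ (m - 1) :=
      funext hEqk
    rw [hfun] at hLHS
    exact tendsto_nhds_unique hLHS hRHS
  exact ⟨ρ, u, hρ0, hu_pos, hfinal⟩

end limitPF

section cycles

variable {m n : ℕ}

lemma out_arc (hm : 2 ≤ m) (hn : 0 < n) (A : Fin n → (Fin (m - 1) → Fin n) → ℝ)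
    (hirr : StronglyConnected (tArc m n A)) (hNZ : ∃ i t, A i t ≠ 0) :
    ∀ i, ∃ j, tArc m n A i j := by
  obtain ⟨i0, t0, h0⟩ := hNZ
  intro i
  rcases (hirr i i0).cases_head with h | ⟨c, hc, -⟩
  · subst h
    exact ⟨t0 ⟨0, by omega⟩, t0, h0, ⟨⟨0, by omega⟩, rfl⟩⟩
  · exact ⟨c, hc⟩

lemma cycle_bound_lower (hm : 2 ≤ m) (hn : 0 < n)
    (A : Fin n → (Fin (m - 1) → Fin n) → ℝ) (hA : ∀ i t, 0 ≤ A i t)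
    (hout : ∀ i, ∃ j, tArc m n A i j)
    {ρ : ℝ} {u : Fin n → ℝ} (hρ0 : 0 ≤ ρ) (hu : ∀ i, 0 < u i)
    (hequ : ∀ i, Ax m n A u i = ρ * u i ^ (m - 1))
    (x : Fin n → ℝ) (hx : ∀ i, 0 < x i) :
    ∃ p γ, IsCircuit (tArc m n A) p γ ∧
      ρ ^ p ≤ ∏ j ∈ Finset.range p, Ax m n A x (γ j) / x (γ j) ^ (m - 1) := by
  classical
  have hm1 : m - 1 ≠ 0 := by omega
  set z : Fin n → ℝ := fun i => x i / u i with hz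
  have hz_pos : ∀ i, 0 < z i := fun i => div_pos (hx i) (hu i)
  have hxuz : ∀ i, x i = u i * z i := by
    intro i
    simp only [hz]
    rw [mul_comm, div_mul_cancel₀ _ (hu i).ne']
  set N : Fin n → Finset (Fin n) := fun i => Finset.univ.filter (fun j => tArc m n A i j)
    with hN
  have hNne : ∀ i, (N i).Nonempty := by
    intro i; obtain ⟨j, hj⟩ := hout i; exact ⟨j, by simp [hN, hj]⟩
  have hNmem : ∀ i t (l : Fin (m - 1)), A i t ≠ 0 → t l ∈ N i := by
    intro i t l h
    simp only [hN, Finset.mem_filter]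
    exact ⟨Finset.mem_univ _, ⟨t, h, ⟨l, rfl⟩⟩⟩
  have hNarc : ∀ i j, j ∈ N i → tArc m n A i j := by
    intro i j hj
    simpa [hN] using (Finset.mem_filter.mp hj).2
  choose σ hσN hσeq using fun i => Finset.exists_mem_eq_inf' (hNne i) z
  have hσmin : ∀ i j, j ∈ N i → z (σ i) ≤ z j := by
    intro i j hj
    rw [← hσeq i]
    exact Finset.inf'_le _ hj
  have hkey : ∀ i, ρ * (z (σ i) / z i) ^ (m - 1) ≤ Ax m n A x i / x i ^ (m - 1) := by
    intro i
    have hsum : z (σ i) ^ (m - 1) * (ρ * u i ^ (m - 1)) ≤ Ax m n A x i := by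
      rw [← hequ i]
      unfold Ax
      rw [Finset.mul_sum]
      apply Finset.sum_le_sum
      intro t _
      by_cases h : A i t = 0
      · simp [h]
      · have hf : ∀ l : Fin (m - 1), u (t l) * z (σ i) ≤ x (t l) := by
          intro l
          rw [hxuz (t l)]
          exact mul_le_mul_of_nonneg_left (hσmin i (t l) (hNmem i t l h)) (hu (t l)).le
        calc z (σ i) ^ (m - 1) * (A i t * ∏ l, u (t l))
            = A i t * ∏ l, (u (t l) * z (σ i)) := by
              rw [Finset.prod_mul_distrib, Finset.prod_const, Finset.card_univ,
                Fintype.card_fin]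
              ring
          _ ≤ A i t * ∏ l, x (t l) := by
              apply mul_le_mul_of_nonneg_left _ (hA i t)
              exact Finset.prod_le_prod
                (fun l _ => mul_nonneg (hu _).le (hz_pos _).le) (fun l _ => hf l)
    have hx_pow : (0:ℝ) < x i ^ (m - 1) := pow_pos (hx i) _
    rw [le_div_iff₀ hx_pow]
    have hxpow : x i ^ (m - 1) = u i ^ (m - 1) * z i ^ (m - 1) := by rw [hxuz i, mul_pow]
    rw [hxpow, div_pow]
    have hZ : z i ^ (m - 1) ≠ 0 := (pow_pos (hz_pos i) _).ne'
    have hrw : ρ * (z (σ i) ^ (m - 1) / z i ^ (m - 1)) * (u i ^ (m - 1) * z i ^ (m - 1)) =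
        z (σ i) ^ (m - 1) * (ρ * u i ^ (m - 1)) := by
      calc ρ * (z (σ i) ^ (m - 1) / z i ^ (m - 1)) * (u i ^ (m - 1) * z i ^ (m - 1))
          = ρ * z (σ i) ^ (m - 1) * u i ^ (m - 1) * (z i ^ (m - 1) / z i ^ (m - 1)) := by
            ring
        _ = z (σ i) ^ (m - 1) * (ρ * u i ^ (m - 1)) := by
            rw [div_self hZ]
            ring
    rw [hrw]
    exact hsum
  obtain ⟨i0, p, hp, hcyc⟩ := cycle_of_fun hn σ
  refine ⟨p, fun j => σ^[j] i0, ⟨hp, ?_, ?_⟩, ?_⟩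
  · show σ^[p] i0 = σ^[0] i0
    rw [Function.iterate_zero_apply]
    exact hcyc
  · intro j _
    show tArc m n A (σ^[j] i0) (σ^[j+1] i0)
    rw [Function.iterate_succ_apply']
    exact hNarc _ _ (hσN _)
  · have htel : ∏ j ∈ Finset.range p, z (σ^[j+1] i0) / z (σ^[j] i0) = 1 := by
      rw [telescope_prod (fun j => z (σ^[j] i0)) (fun j => (hz_pos _).ne') p]
      simp only [Function.iterate_zero_apply, hcyc]
      exact div_self (hz_pos i0).ne'
    have hprod : ∏ j ∈ Finset.range p, (ρ * (z (σ^[j+1] i0) / z (σ^[j] i0)) ^ (m - 1)) =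
        ρ ^ p := by
      rw [Finset.prod_mul_distrib, Finset.prod_const, Finset.card_range,
        Finset.prod_pow, htel, one_pow, mul_one]
    show ρ ^ p ≤ ∏ j ∈ Finset.range p, Ax m n A x (σ^[j] i0) / x (σ^[j] i0) ^ (m - 1)
    calc ρ ^ p
        = ∏ j ∈ Finset.range p, (ρ * (z (σ^[j+1] i0) / z (σ^[j] i0)) ^ (m - 1)) := hprod.symm
      _ ≤ ∏ j ∈ Finset.range p, Ax m n A x (σ^[j] i0) / x (σ^[j] i0) ^ (m - 1) := by
          apply Finset.prod_le_prod
          · intro j _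
            exact mul_nonneg hρ0 (pow_nonneg (div_nonneg (hz_pos _).le (hz_pos _).le) _)
          · intro j _
            rw [Function.iterate_succ_apply']
            exact hkey _

lemma cycle_bound_upper (hm : 2 ≤ m) (hn : 0 < n)
    (A : Fin n → (Fin (m - 1) → Fin n) → ℝ) (hA : ∀ i t, 0 ≤ A i t)
    (hout : ∀ i, ∃ j, tArc m n A i j)
    {ρ : ℝ} {u : Fin n → ℝ} (hρ0 : 0 ≤ ρ) (hu : ∀ i, 0 < u i)
    (hequ : ∀ i, Ax m n A u i = ρ * u i ^ (m - 1))
    (x : Fin n → ℝ) (hx : ∀ i, 0 < x i) :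
    ∃ p γ, IsCircuit (tArc m n A) p γ ∧
      (∏ j ∈ Finset.range p, Ax m n A x (γ j) / x (γ j) ^ (m - 1)) ≤ ρ ^ p := by
  classical
  have hm1 : m - 1 ≠ 0 := by omega
  set z : Fin n → ℝ := fun i => x i / u i with hz
  have hz_pos : ∀ i, 0 < z i := fun i => div_pos (hx i) (hu i)
  have hxuz : ∀ i, x i = u i * z i := by
    intro i
    simp only [hz]
    rw [mul_comm, div_mul_cancel₀ _ (hu i).ne']
  set N : Fin n → Finset (Fin n) := fun i => Finset.univ.filter (fun j => tArc m n A i j)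
    with hN
  have hNne : ∀ i, (N i).Nonempty := by
    intro i; obtain ⟨j, hj⟩ := hout i; exact ⟨j, by simp [hN, hj]⟩
  have hNmem : ∀ i t (l : Fin (m - 1)), A i t ≠ 0 → t l ∈ N i := by
    intro i t l h
    simp only [hN, Finset.mem_filter]
    exact ⟨Finset.mem_univ _, ⟨t, h, ⟨l, rfl⟩⟩⟩
  have hNarc : ∀ i j, j ∈ N i → tArc m n A i j := by
    intro i j hj
    simpa [hN] using (Finset.mem_filter.mp hj).2
  choose σ hσN hσeq using fun i => Finset.exists_mem_eq_sup' (hNne i) z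
  have hσmax : ∀ i j, j ∈ N i → z j ≤ z (σ i) := by
    intro i j hj
    rw [← hσeq i]
    exact Finset.le_sup' _ hj
  have hkey : ∀ i, Ax m n A x i / x i ^ (m - 1) ≤ ρ * (z (σ i) / z i) ^ (m - 1) := by
    intro i
    have hsum : Ax m n A x i ≤ z (σ i) ^ (m - 1) * (ρ * u i ^ (m - 1)) := by
      rw [← hequ i]
      unfold Ax
      rw [Finset.mul_sum]
      apply Finset.sum_le_sum
      intro t _
      by_cases h : A i t = 0
      · simp [h]
      · have hf : ∀ l : Fin (m - 1), x (t l) ≤ u (t l) * z (σ i) := by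
          intro l
          rw [hxuz (t l)]
          exact mul_le_mul_of_nonneg_left (hσmax i (t l) (hNmem i t l h)) (hu (t l)).le
        calc A i t * ∏ l, x (t l)
            ≤ A i t * ∏ l, (u (t l) * z (σ i)) := by
              apply mul_le_mul_of_nonneg_left _ (hA i t)
              exact Finset.prod_le_prod (fun l _ => (hx _).le) (fun l _ => hf l)
          _ = z (σ i) ^ (m - 1) * (A i t * ∏ l, u (t l)) := by
              rw [Finset.prod_mul_distrib, Finset.prod_const, Finset.card_univ,
                Fintype.card_fin]
              ring
    have hx_pow : (0:ℝ) < x i ^ (m - 1) := pow_pos (hx i) _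
    rw [div_le_iff₀ hx_pow]
    have hxpow : x i ^ (m - 1) = u i ^ (m - 1) * z i ^ (m - 1) := by rw [hxuz i, mul_pow]
    rw [hxpow, div_pow]
    have hZ : z i ^ (m - 1) ≠ 0 := (pow_pos (hz_pos i) _).ne'
    have hrw : ρ * (z (σ i) ^ (m - 1) / z i ^ (m - 1)) * (u i ^ (m - 1) * z i ^ (m - 1)) =
        z (σ i) ^ (m - 1) * (ρ * u i ^ (m - 1)) := by
      calc ρ * (z (σ i) ^ (m - 1) / z i ^ (m - 1)) * (u i ^ (m - 1) * z i ^ (m - 1))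
          = ρ * z (σ i) ^ (m - 1) * u i ^ (m - 1) * (z i ^ (m - 1) / z i ^ (m - 1)) := by
            ring
        _ = z (σ i) ^ (m - 1) * (ρ * u i ^ (m - 1)) := by
            rw [div_self hZ]
            ring
    rw [hrw]
    exact hsum
  obtain ⟨i0, p, hp, hcyc⟩ := cycle_of_fun hn σ
  refine ⟨p, fun j => σ^[j] i0, ⟨hp, ?_, ?_⟩, ?_⟩
  · show σ^[p] i0 = σ^[0] i0
    rw [Function.iterate_zero_apply]
    exact hcyc
  · intro j _
    show tArc m n A (σ^[j] i0) (σ^[j+1] i0)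
    rw [Function.iterate_succ_apply']
    exact hNarc _ _ (hσN _)
  · have htel : ∏ j ∈ Finset.range p, z (σ^[j+1] i0) / z (σ^[j] i0) = 1 := by
      rw [telescope_prod (fun j => z (σ^[j] i0)) (fun j => (hz_pos _).ne') p]
      simp only [Function.iterate_zero_apply, hcyc]
      exact div_self (hz_pos i0).ne'
    have hprod : ∏ j ∈ Finset.range p, (ρ * (z (σ^[j+1] i0) / z (σ^[j] i0)) ^ (m - 1)) =
        ρ ^ p := by
      rw [Finset.prod_mul_distrib, Finset.prod_const, Finset.card_range,
        Finset.prod_pow, htel, one_pow, mul_one]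
    show (∏ j ∈ Finset.range p, Ax m n A x (σ^[j] i0) / x (σ^[j] i0) ^ (m - 1)) ≤ ρ ^ p
    calc ∏ j ∈ Finset.range p, Ax m n A x (σ^[j] i0) / x (σ^[j] i0) ^ (m - 1)
        ≤ ∏ j ∈ Finset.range p, (ρ * (z (σ^[j+1] i0) / z (σ^[j] i0)) ^ (m - 1)) := by
          apply Finset.prod_le_prod
          · intro j _
            exact div_nonneg (Ax_nonneg m n A x hA (fun i => (hx i).le) _)
              (pow_nonneg (hx _).le _)
          · intro j _
            rw [Function.iterate_succ_apply']
            exact hkey _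
      _ = ρ ^ p := hprod

end cycles


section assemble

variable {m n : ℕ}

/-- The set of circuit geometric means for the scaling vector `x`. -/
def circSet (m n : ℕ) (A : Fin n → (Fin (m - 1) → Fin n) → ℝ) (x : Fin n → ℝ) : Set ℝ :=
  {s : ℝ | ∃ (p : ℕ) (γ : ℕ → Fin n), IsCircuit (tArc m n A) p γ ∧
    s = (∏ j ∈ Finset.range p, Ax m n A x (γ j) / x (γ j) ^ (m - 1)) ^ ((p : ℝ)⁻¹)}

lemma ratio_nonneg (A : Fin n → (Fin (m - 1) → Fin n) → ℝ) (hA : ∀ i t, 0 ≤ A i t)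
    {x : Fin n → ℝ} (hx : ∀ i, 0 < x i) (i : Fin n) :
    0 ≤ Ax m n A x i / x i ^ (m - 1) :=
  div_nonneg (Ax_nonneg m n A x hA (fun j => (hx j).le) i) (pow_nonneg (hx i).le _)

lemma circSet_nonneg (A : Fin n → (Fin (m - 1) → Fin n) → ℝ) (hA : ∀ i t, 0 ≤ A i t)
    {x : Fin n → ℝ} (hx : ∀ i, 0 < x i) :
    ∀ s ∈ circSet m n A x, 0 ≤ s := by
  rintro s ⟨p, γ, hcirc, rfl⟩
  apply Real.rpow_nonneg
  exact Finset.prod_nonneg fun j _ => ratio_nonneg A hA hx _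

lemma circSet_bddBelow (A : Fin n → (Fin (m - 1) → Fin n) → ℝ) (hA : ∀ i t, 0 ≤ A i t)
    {x : Fin n → ℝ} (hx : ∀ i, 0 < x i) : BddBelow (circSet m n A x) :=
  ⟨0, fun s hs => circSet_nonneg A hA hx s hs⟩

lemma circSet_bddAbove (hn : 0 < n) (A : Fin n → (Fin (m - 1) → Fin n) → ℝ)
    (hA : ∀ i t, 0 ≤ A i t) {x : Fin n → ℝ} (hx : ∀ i, 0 < x i) :
    BddAbove (circSet m n A x) := by
  have hne : (Finset.univ : Finset (Fin n)).Nonempty := ⟨⟨0, hn⟩, Finset.mem_univ _⟩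
  set M : ℝ := Finset.univ.sup' hne (fun i => Ax m n A x i / x i ^ (m - 1)) with hM
  have hM0 : 0 ≤ M :=
    le_trans (ratio_nonneg A hA hx ⟨0, hn⟩)
      (Finset.le_sup' (f := fun i => Ax m n A x i / x i ^ (m - 1)) (Finset.mem_univ _))
  refine ⟨M, ?_⟩
  rintro s ⟨p, γ, ⟨hp, -, -⟩, rfl⟩
  apply rpow_inv_le (Finset.prod_nonneg fun j _ => ratio_nonneg A hA hx _) hM0 hp.ne'
  calc ∏ j ∈ Finset.range p, Ax m n A x (γ j) / x (γ j) ^ (m - 1)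
      ≤ ∏ _j ∈ Finset.range p, M :=
        Finset.prod_le_prod (fun j _ => ratio_nonneg A hA hx _)
          (fun j _ => Finset.le_sup' (f := fun i => Ax m n A x i / x i ^ (m - 1))
            (Finset.mem_univ _))
    _ = M ^ p := by rw [Finset.prod_const, Finset.card_range]

lemma circSet_u (hm : 2 ≤ m) (hn : 0 < n) (A : Fin n → (Fin (m - 1) → Fin n) → ℝ)
    (hA : ∀ i t, 0 ≤ A i t) (hout : ∀ i, ∃ j, tArc m n A i j)
    {ρ : ℝ} {u : Fin n → ℝ} (hρ0 : 0 ≤ ρ) (hu : ∀ i, 0 < u i)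
    (hequ : ∀ i, Ax m n A u i = ρ * u i ^ (m - 1)) :
    circSet m n A u = {ρ} := by
  have hratio_u : ∀ i, Ax m n A u i / u i ^ (m - 1) = ρ := by
    intro i
    rw [hequ i, mul_div_assoc, div_self (pow_pos (hu i) _).ne', mul_one]
  ext s
  simp only [Set.mem_singleton_iff]
  constructor
  · rintro ⟨p, γ, ⟨hp, -, -⟩, rfl⟩
    have : ∏ j ∈ Finset.range p, Ax m n A u (γ j) / u (γ j) ^ (m - 1) = ρ ^ p := by
      rw [Finset.prod_congr rfl (fun j _ => hratio_u (γ j)), Finset.prod_const,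
        Finset.card_range]
    rw [this, pow_rpow_inv hρ0 hp.ne']
  · intro hs
    rw [hs]
    obtain ⟨p, γ, hcirc, -⟩ :=
      cycle_bound_lower hm hn A hA hout hρ0 hu hequ u hu
    refine ⟨p, γ, hcirc, ?_⟩
    have : ∏ j ∈ Finset.range p, Ax m n A u (γ j) / u (γ j) ^ (m - 1) = ρ ^ p := by
      rw [Finset.prod_congr rfl (fun j _ => hratio_u (γ j)), Finset.prod_const,
        Finset.card_range]
    rw [this, pow_rpow_inv hρ0 hcirc.1.ne']

lemma spec_greatest (hm : 2 ≤ m) (hn : 0 < n) (A : Fin n → (Fin (m - 1) → Fin n) → ℝ)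
    (hA : ∀ i t, 0 ≤ A i t)
    {ρ : ℝ} {u : Fin n → ℝ} (hρ0 : 0 ≤ ρ) (hu : ∀ i, 0 < u i)
    (hequ : ∀ i, Ax m n A u i = ρ * u i ^ (m - 1)) :
    IsGreatest {r : ℝ | ∃ lam : ℂ, IsEig m n A lam ∧ ‖lam‖ = r} ρ := by
  have hm1 : m - 1 ≠ 0 := by omega
  have hne : (Finset.univ : Finset (Fin n)).Nonempty := ⟨⟨0, hn⟩, Finset.mem_univ _⟩
  constructor
  · -- ρ is an eigenvalue via the positive eigenvector u
    refine ⟨(ρ : ℂ), ⟨fun i => (u i : ℂ), ?_, ?_⟩, ?_⟩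
    · intro h
      have h0 := congrFun h ⟨0, hn⟩
      simp only [Pi.zero_apply, Complex.ofReal_eq_zero] at h0
      exact (hu ⟨0, hn⟩).ne' h0
    · intro i
      have hre := hequ i
      unfold Ax at hre
      calc ∑ t : Fin (m - 1) → Fin n, (A i t : ℂ) * ∏ j, ((u (t j) : ℝ) : ℂ)
          = ((∑ t : Fin (m - 1) → Fin n, A i t * ∏ j, u (t j) : ℝ) : ℂ) := by
            push_cast
            rfl
        _ = ((ρ * u i ^ (m - 1) : ℝ) : ℂ) := by rw [hre]
        _ = (ρ : ℂ) * ((u i : ℝ) : ℂ) ^ (m - 1) := by push_cast; rfl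
    · rw [Complex.norm_of_nonneg hρ0]
  · -- every eigenvalue has modulus at most ρ
    rintro r ⟨lam, ⟨xc, hxc0, hxceq⟩, rfl⟩
    set y : Fin n → ℝ := fun i => ‖xc i‖ with hy
    have hy0 : ∀ i, 0 ≤ y i := fun i => norm_nonneg _
    have hAxy : ∀ i, ‖lam‖ * y i ^ (m - 1) ≤ Ax m n A y i := by
      intro i
      calc ‖lam‖ * y i ^ (m - 1)
          = ‖lam * xc i ^ (m - 1)‖ := by
            rw [norm_mul, norm_pow]
        _ = ‖∑ t : Fin (m - 1) → Fin n, (A i t : ℂ) * ∏ j, xc (t j)‖ := by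
            rw [hxceq i]
        _ ≤ ∑ t : Fin (m - 1) → Fin n, ‖(A i t : ℂ) * ∏ j, xc (t j)‖ :=
            norm_sum_le _ _
        _ = Ax m n A y i := by
            unfold Ax
            apply Finset.sum_congr rfl
            intro t _
            rw [norm_mul, norm_prod, Complex.norm_of_nonneg (hA i t)]
    obtain ⟨i2, hi2⟩ := Function.ne_iff.mp hxc0
    have hyi2 : 0 < y i2 := norm_pos_iff.mpr hi2
    obtain ⟨i1, -, hi1⟩ := Finset.exists_mem_eq_sup' hne (fun j => y j / u j)
    have hmaxp : ∀ j, y j / u j ≤ y i1 / u i1 := by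
      intro j
      rw [← hi1]
      exact Finset.le_sup' (f := fun j => y j / u j) (Finset.mem_univ j)
    have hcpos : 0 < y i1 / u i1 := lt_of_lt_of_le (div_pos hyi2 (hu i2)) (hmaxp i2)
    have hyc : ∀ j, y j ≤ (y i1 / u i1) * u j := by
      intro j
      have h1 := hmaxp j
      rw [div_le_iff₀ (hu j)] at h1
      linarith [h1]
    have hyi1 : y i1 = (y i1 / u i1) * u i1 := (div_mul_cancel₀ _ (hu i1).ne').symm
    have hchain : ‖lam‖ * ((y i1 / u i1) * u i1) ^ (m - 1) ≤
        ρ * ((y i1 / u i1) * u i1) ^ (m - 1) := by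
      calc ‖lam‖ * ((y i1 / u i1) * u i1) ^ (m - 1)
          = ‖lam‖ * y i1 ^ (m - 1) := by rw [← hyi1]
        _ ≤ Ax m n A y i1 := hAxy i1
        _ ≤ Ax m n A (fun j => (y i1 / u i1) * u j) i1 :=
            Ax_mono m n A y _ hA hy0 (fun j => hyc j) i1
        _ = (y i1 / u i1) ^ (m - 1) * Ax m n A u i1 := Ax_smul m n A u _ i1
        _ = (y i1 / u i1) ^ (m - 1) * (ρ * u i1 ^ (m - 1)) := by rw [hequ i1]
        _ = ρ * ((y i1 / u i1) * u i1) ^ (m - 1) := by rw [mul_pow]; ring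
    have hpow_pos : 0 < ((y i1 / u i1) * u i1) ^ (m - 1) :=
      pow_pos (mul_pos hcpos (hu i1)) _
    exact le_of_mul_le_mul_right (by linarith [hchain]) hpow_pos

end assemble

theorem stmt6 (m n : ℕ) (hm : 2 ≤ m) (hn : 0 < n)
    (A : Fin n → (Fin (m - 1) → Fin n) → ℝ) (hA : ∀ i t, 0 ≤ A i t)
    (hirr : StronglyConnected (tArc m n A)) :
    specRad m n A = sInf {r : ℝ | ∃ x : Fin n → ℝ, (∀ i, 0 < x i) ∧
        r = sSup {s : ℝ | ∃ (p : ℕ) (γ : ℕ → Fin n), IsCircuit (tArc m n A) p γ ∧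
          s = (∏ j ∈ Finset.range p, Ax m n A x (γ j) / x (γ j) ^ (m - 1)) ^ ((p : ℝ)⁻¹)}} ∧
    specRad m n A = sSup {r : ℝ | ∃ x : Fin n → ℝ, (∀ i, 0 < x i) ∧
        r = sInf {s : ℝ | ∃ (p : ℕ) (γ : ℕ → Fin n), IsCircuit (tArc m n A) p γ ∧
          s = (∏ j ∈ Finset.range p, Ax m n A x (γ j) / x (γ j) ^ (m - 1)) ^ ((p : ℝ)⁻¹)}} := by
  classical
  suffices h : (specRad m n A =
      sInf {r : ℝ | ∃ x : Fin n → ℝ, (∀ i, 0 < x i) ∧ r = sSup (circSet m n A x)}) ∧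
      (specRad m n A =
      sSup {r : ℝ | ∃ x : Fin n → ℝ, (∀ i, 0 < x i) ∧ r = sInf (circSet m n A x)}) by
    exact h
  by_cases hNZ : ∃ i t, A i t ≠ 0
  · -- main case
    obtain ⟨ρ, u, hρ0, hu, hequ⟩ := exists_pf hm hn A hA hirr hNZ
    have hout := out_arc hm hn A hirr hNZ
    have hSpec : specRad m n A = ρ := (spec_greatest hm hn A hA hρ0 hu hequ).csSup_eq
    have hSet1 : IsLeast
        {r : ℝ | ∃ x : Fin n → ℝ, (∀ i, 0 < x i) ∧ r = sSup (circSet m n A x)} ρ := by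
      constructor
      · exact ⟨u, hu, by rw [circSet_u hm hn A hA hout hρ0 hu hequ, csSup_singleton]⟩
      · rintro r ⟨x, hx, rfl⟩
        obtain ⟨p, γ, hcirc, hge⟩ := cycle_bound_lower hm hn A hA hout hρ0 hu hequ x hx
        have hmem : (∏ j ∈ Finset.range p, Ax m n A x (γ j) / x (γ j) ^ (m - 1)) ^
            ((p : ℝ)⁻¹) ∈ circSet m n A x := ⟨p, γ, hcirc, rfl⟩
        have h1 : ρ ≤ (∏ j ∈ Finset.range p, Ax m n A x (γ j) / x (γ j) ^ (m - 1)) ^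
            ((p : ℝ)⁻¹) :=
          le_rpow_inv (Finset.prod_nonneg fun j _ => ratio_nonneg A hA hx _) hρ0
            hcirc.1.ne' hge
        exact le_trans h1 (le_csSup (circSet_bddAbove hn A hA hx) hmem)
    have hSet2 : IsGreatest
        {r : ℝ | ∃ x : Fin n → ℝ, (∀ i, 0 < x i) ∧ r = sInf (circSet m n A x)} ρ := by
      constructor
      · exact ⟨u, hu, by rw [circSet_u hm hn A hA hout hρ0 hu hequ, csInf_singleton]⟩
      · rintro r ⟨x, hx, rfl⟩
        obtain ⟨p, γ, hcirc, hle⟩ := cycle_bound_upper hm hn A hA hout hρ0 hu hequ x hx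
        have hmem : (∏ j ∈ Finset.range p, Ax m n A x (γ j) / x (γ j) ^ (m - 1)) ^
            ((p : ℝ)⁻¹) ∈ circSet m n A x := ⟨p, γ, hcirc, rfl⟩
        have h1 : (∏ j ∈ Finset.range p, Ax m n A x (γ j) / x (γ j) ^ (m - 1)) ^
            ((p : ℝ)⁻¹) ≤ ρ :=
          rpow_inv_le (Finset.prod_nonneg fun j _ => ratio_nonneg A hA hx _) hρ0
            hcirc.1.ne' hle
        exact le_trans (csInf_le (circSet_bddBelow A hA hx) hmem) h1
    exact ⟨by rw [hSpec, hSet1.csInf_eq], by rw [hSpec, hSet2.csSup_eq]⟩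
  · -- degenerate case : A = 0
    push_neg at hNZ
    have harc : ∀ i j, ¬ tArc m n A i j := by
      rintro i j ⟨t, ht, -⟩
      exact ht (hNZ i t)
    have hcirc_empty : ∀ x : Fin n → ℝ, circSet m n A x = ∅ := by
      intro x
      ext s
      simp only [circSet, Set.mem_setOf_eq, Set.mem_empty_iff_false, iff_false]
      rintro ⟨p, γ, ⟨hp, -, hstep⟩, -⟩
      exact harc _ _ (hstep 0 hp)
    have hone : ∀ i : Fin n, (0:ℝ) < (fun _ => (1:ℝ)) i := fun _ => one_pos
    have hS1 : {r : ℝ | ∃ x : Fin n → ℝ, (∀ i, 0 < x i) ∧ r = sSup (circSet m n A x)} =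
        {0} := by
      ext r
      simp only [Set.mem_setOf_eq, Set.mem_singleton_iff]
      constructor
      · rintro ⟨x, hx, rfl⟩
        rw [hcirc_empty x, Real.sSup_empty]
      · rintro rfl
        exact ⟨fun _ => 1, hone, by rw [hcirc_empty, Real.sSup_empty]⟩
    have hS2 : {r : ℝ | ∃ x : Fin n → ℝ, (∀ i, 0 < x i) ∧ r = sInf (circSet m n A x)} =
        {0} := by
      ext r
      simp only [Set.mem_setOf_eq, Set.mem_singleton_iff]
      constructor
      · rintro ⟨x, hx, rfl⟩
        rw [hcirc_empty x, Real.sInf_empty]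
      · rintro rfl
        exact ⟨fun _ => 1, hone, by rw [hcirc_empty, Real.sInf_empty]⟩
    have hE : {r : ℝ | ∃ lam : ℂ, IsEig m n A lam ∧ ‖lam‖ = r} = {0} := by
      ext r
      simp only [Set.mem_setOf_eq, Set.mem_singleton_iff]
      constructor
      · rintro ⟨lam, ⟨xc, hxc0, hxe⟩, rfl⟩
        obtain ⟨i, hi⟩ := Function.ne_iff.mp hxc0
        have h := hxe i
        have hz : ∑ t : Fin (m - 1) → Fin n, (A i t : ℂ) * ∏ j, xc (t j) = 0 := by
          apply Finset.sum_eq_zero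
          intro t _
          rw [hNZ i t]
          simp
        rw [hz] at h
        have hxpow : xc i ^ (m - 1) ≠ 0 := pow_ne_zero _ hi
        have hlam : lam = 0 := by
          rcases mul_eq_zero.mp h.symm with h' | h'
          · exact h'
          · exact absurd h' hxpow
        rw [hlam]
        simp
      · rintro rfl
        refine ⟨0, ⟨fun _ => 1, ?_, ?_⟩, by simp⟩
        · intro hzero
          have h0 := congrFun hzero ⟨0, hn⟩
          norm_num at h0
        · intro i
          simp [hNZ]
    have hspec0 : specRad m n A = 0 := by
      unfold specRad
      rw [hE, csSup_singleton]
    rw [hspec0, hS1, hS2, csInf_singleton, csSup_singleton]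
    exact ⟨rfl, rfl⟩
end

section
/- Let H be a connected k-uniform hypergraph with n vertices and vertex degrees d_1,...,d_n. Then min over circuits gamma in the digraph of the adjacency tensor A_H of (prod_{i in gamma} d_i)^{1/|gamma|} <= rho(A_H) <= max over circuits gamma of (prod_{i in gamma} d_i)^{1/|gamma|}. -/
open scoped BigOperators
open Finset

/-- The degree of vertex `i` in the hypergraph with edge set `E`. -/
def deg (n : ℕ) (E : Finset (Finset (Fin n))) (i : Fin n) : ℕ :=
  (E.filter (fun e => i ∈ e)).card

/-- The adjacency tensor of a `k`-uniform hypergraph with edge set `E`: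
    entry `1/(k-1)!` when the indices form an edge, `0` otherwise. -/
noncomputable def adjT (k n : ℕ) (E : Finset (Finset (Fin n))) :
    Fin n → (Fin (k - 1) → Fin n) → ℝ :=
  fun i t =>
    if insert i (Finset.image t Finset.univ) ∈ E then 1 / (Nat.factorial (k - 1) : ℝ) else 0

/-- The signless Laplacian tensor `Q = D + A` of a `k`-uniform hypergraph. -/
noncomputable def qT (k n : ℕ) (E : Finset (Finset (Fin n))) :
    Fin n → (Fin (k - 1) → Fin n) → ℝ :=
  fun i t => (if ∀ j, t j = i then (deg n E i : ℝ) else 0) + adjT k n E i t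

/-- The hypergraph with edge set `E` is connected. -/
def HConnected (n : ℕ) (E : Finset (Finset (Fin n))) : Prop :=
  ∀ i j : Fin n, Relation.ReflTransGen (fun u v => ∃ e ∈ E, u ∈ e ∧ v ∈ e) i j


lemma card_image_fiber {n m : ℕ} {S : Finset (Fin n)} (hS : S.card = m) :
    (Finset.univ.filter (fun t : Fin m → Fin n => Finset.image t Finset.univ = S)).card
      = Nat.factorial m := by
  classical
  rw [← Fintype.card_subtype]
  have hcardS : Fintype.card S = m := by simp [hS]
  have e0 : Fin m ≃ S := (finCongr hcardS.symm).trans (Fintype.equivFin S).symm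
  have key : {t : Fin m → Fin n // Finset.image t Finset.univ = S} ≃ (Fin m ≃ S) := by
    refine
    { toFun := fun t => Equiv.ofBijective
        (fun j => (⟨t.1 j, by have h := Finset.mem_image_of_mem t.1 (Finset.mem_univ j); rwa [t.2] at h⟩ : S))
        ?_
      invFun := fun f => ⟨fun j => (f j : Fin n), ?_⟩
      left_inv := ?_
      right_inv := ?_ }
    · -- bijective
      obtain ⟨t, ht⟩ := t
      have hinj : Function.Injective t := by
        have hc : (Finset.image t Finset.univ).card = (Finset.univ : Finset (Fin m)).card := by
          rw [ht, hS, Finset.card_univ, Fintype.card_fin]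
        have h2 := Finset.card_image_iff.mp hc
        rw [Finset.coe_univ] at h2
        intro a b hab
        exact h2 (Set.mem_univ a) (Set.mem_univ b) hab
      have hinj2 : Function.Injective
          (fun j => (⟨t j, by have h := Finset.mem_image_of_mem t (Finset.mem_univ j); rwa [ht] at h⟩ : S)) := by
        intro a b hab
        exact hinj (congrArg Subtype.val hab)
      exact (Fintype.bijective_iff_injective_and_card _).mpr ⟨hinj2, by simp [hcardS]⟩
    · -- image of invFun is S
      ext v
      simp only [Finset.mem_image, Finset.mem_univ, true_and]
      constructor
      · rintro ⟨j, rfl⟩; exact (f j).2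
      · intro hv; exact ⟨f.symm ⟨v, hv⟩, by simp⟩
    · intro t; apply Subtype.ext; funext j; rfl
    · intro f; apply Equiv.ext; intro j; apply Subtype.ext; rfl
  rw [Fintype.card_congr key, Fintype.card_equiv e0, Fintype.card_fin]

lemma Ax_formula {F : Type*} [Field F] [CharZero F] {k n : ℕ} (hk : 2 ≤ k)
    (E : Finset (Finset (Fin n))) (hunif : ∀ e ∈ E, e.card = k) (i : Fin n) (x : Fin n → F) :
    ∑ t : Fin (k-1) → Fin n,
      (if insert i (Finset.image t Finset.univ) ∈ E then ((Nat.factorial (k-1) : F))⁻¹ else 0)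
        * ∏ j, x (t j)
    = ∑ e ∈ E.filter (fun e => i ∈ e), ∏ v ∈ e.erase i, x v := by
  classical
  set c : F := ((Nat.factorial (k-1) : F))⁻¹ with hc
  have step1 : ∀ t : Fin (k-1) → Fin n,
      (if insert i (Finset.image t Finset.univ) ∈ E then c else 0) * ∏ j, x (t j)
      = ∑ e ∈ E.filter (fun e => i ∈ e),
          if insert i (Finset.image t Finset.univ) = e then c * ∏ j, x (t j) else 0 := by
    intro t
    rw [Finset.sum_ite_eq (E.filter (fun e => i ∈ e)) (insert i (Finset.image t Finset.univ))
      (fun _ => c * ∏ j, x (t j))]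
    by_cases h : insert i (Finset.image t Finset.univ) ∈ E
    · rw [if_pos h, if_pos (Finset.mem_filter.mpr ⟨h, Finset.mem_insert_self i _⟩)]
    · rw [if_neg h, if_neg (fun hh => h (Finset.mem_filter.mp hh).1), zero_mul]
  calc ∑ t : Fin (k-1) → Fin n,
        (if insert i (Finset.image t Finset.univ) ∈ E then c else 0) * ∏ j, x (t j)
      = ∑ t : Fin (k-1) → Fin n, ∑ e ∈ E.filter (fun e => i ∈ e),
          if insert i (Finset.image t Finset.univ) = e then c * ∏ j, x (t j) else 0 := by
        exact Finset.sum_congr rfl (fun t _ => step1 t)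
    _ = ∑ e ∈ E.filter (fun e => i ∈ e), ∑ t : Fin (k-1) → Fin n,
          if insert i (Finset.image t Finset.univ) = e then c * ∏ j, x (t j) else 0 :=
        Finset.sum_comm
    _ = ∑ e ∈ E.filter (fun e => i ∈ e), ∏ v ∈ e.erase i, x v := by
        refine Finset.sum_congr rfl (fun e he => ?_)
        rw [Finset.mem_filter] at he
        obtain ⟨heE, hie⟩ := he
        have hcard : e.card = k := hunif e heE
        -- the inner sum
        rw [Finset.sum_ite, Finset.sum_const_zero, add_zero]
        have hfiber : ∀ t : Fin (k-1) → Fin n,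
            insert i (Finset.image t Finset.univ) = e ↔ Finset.image t Finset.univ = e.erase i := by
          intro t
          constructor
          · intro ht
            have hile : i ∉ Finset.image t Finset.univ := by
              intro hmem
              have h1 : insert i (Finset.image t Finset.univ) = Finset.image t Finset.univ :=
                Finset.insert_eq_self.mpr hmem
              have h2 : e.card ≤ k - 1 := by
                rw [← ht, h1]
                exact le_trans (Finset.card_image_le) (by simp)
              omega
            rw [← ht, Finset.erase_insert hile]
          · intro ht
            rw [ht, Finset.insert_erase hie]
        have hcong : (Finset.univ.filter
              (fun t : Fin (k-1) → Fin n => insert i (Finset.image t Finset.univ) = e))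
            = (Finset.univ.filter
              (fun t : Fin (k-1) → Fin n => Finset.image t Finset.univ = e.erase i)) := by
          apply Finset.filter_congr
          intro t _
          simp [hfiber t]
        rw [hcong]
        have hScard : (e.erase i).card = k - 1 := by
          rw [Finset.card_erase_of_mem hie, hcard]
        have hterm : ∀ t ∈ Finset.univ.filter
            (fun t : Fin (k-1) → Fin n => Finset.image t Finset.univ = e.erase i),
            c * ∏ j, x (t j) = c * ∏ v ∈ e.erase i, x v := by
          intro t ht
          rw [Finset.mem_filter] at ht
          have ht2 := ht.2
          have hinj : Set.InjOn t ↑(Finset.univ : Finset (Fin (k-1))) := by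
            apply Finset.card_image_iff.mp
            rw [ht2, hScard, Finset.card_univ, Fintype.card_fin]
          congr 1
          rw [← ht2, Finset.prod_image (fun a ha b hb hab => hinj ha hb hab)]
        rw [Finset.sum_congr rfl hterm, Finset.sum_const, card_image_fiber hScard, nsmul_eq_mul]
        rw [hc, ← mul_assoc]
        have hfac : ((Nat.factorial (k-1) : F)) ≠ 0 := by
          exact_mod_cast Nat.cast_ne_zero.mpr (Nat.factorial_ne_zero (k-1))
        rw [mul_inv_cancel₀ hfac, one_mul]

section
variable {k n : ℕ} (hk : 2 ≤ k) (E : Finset (Finset (Fin n))) (hunif : ∀ e ∈ E, e.card = k)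
include hk hunif

lemma adjT_Ax_real (i : Fin n) (x : Fin n → ℝ) :
    ∑ t : Fin (k-1) → Fin n, adjT k n E i t * ∏ j, x (t j)
      = ∑ e ∈ E.filter (fun e => i ∈ e), ∏ v ∈ e.erase i, x v := by
  have h := Ax_formula (F := ℝ) hk E hunif i x
  rw [← h]
  apply Finset.sum_congr rfl
  intro t _
  rw [adjT, one_div]

lemma adjT_Ax_complex (i : Fin n) (x : Fin n → ℂ) :
    ∑ t : Fin (k-1) → Fin n, ((adjT k n E i t : ℝ) : ℂ) * ∏ j, x (t j)
      = ∑ e ∈ E.filter (fun e => i ∈ e), ∏ v ∈ e.erase i, x v := by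
  have h := Ax_formula (F := ℂ) hk E hunif i x
  rw [← h]
  apply Finset.sum_congr rfl
  intro t _
  congr 1
  rw [adjT]
  split_ifs <;> push_cast <;> ring

lemma adjT_slice (i : Fin n) :
    ∑ t : Fin (k-1) → Fin n, adjT k n E i t = (deg n E i : ℝ) := by
  have h := adjT_Ax_real hk E hunif i (fun _ => 1)
  simp only [Finset.prod_const_one, mul_one] at h
  rw [h, Finset.sum_const, nsmul_eq_mul, mul_one, deg]

lemma arc_of_edge {e : Finset (Fin n)} (he : e ∈ E) {i j : Fin n} (hi : i ∈ e) (hj : j ∈ e)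
    (hij : j ≠ i) : tArc k n (adjT k n E) i j := by
  classical
  set S := e.erase i with hSdef
  have hScard : S.card = k - 1 := by
    rw [hSdef, Finset.card_erase_of_mem hi, hunif e he]
  have hcardS : Fintype.card S = k - 1 := by simp [hScard]
  have e1 : Fin (k-1) ≃ S := (finCongr hcardS.symm).trans (Fintype.equivFin S).symm
  refine ⟨fun j => (e1 j : Fin n), ?_, ?_⟩
  · have himg : Finset.image (fun j => (e1 j : Fin n)) Finset.univ = S := by
      ext v
      simp only [Finset.mem_image, Finset.mem_univ, true_and]
      constructor
      · rintro ⟨a, rfl⟩; exact (e1 a).2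
      · intro hv; exact ⟨e1.symm ⟨v, hv⟩, by simp⟩
    rw [adjT, himg, hSdef, Finset.insert_erase hi, if_pos he]
    positivity
  · exact ⟨e1.symm ⟨j, Finset.mem_erase.mpr ⟨hij, hj⟩⟩, by simp⟩

lemma edge_of_arc {i j : Fin n} (h : tArc k n (adjT k n E) i j) :
    ∃ e ∈ E, i ∈ e ∧ j ∈ e ∧ j ≠ i := by
  obtain ⟨t, hne, ⟨a, rfl⟩⟩ := h
  rw [adjT] at hne
  by_cases hmem : insert i (Finset.image t Finset.univ) ∈ E
  · refine ⟨insert i (Finset.image t Finset.univ), hmem, Finset.mem_insert_self i _, ?_, ?_⟩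
    · exact Finset.mem_insert_of_mem (Finset.mem_image_of_mem _ (Finset.mem_univ a))
    · intro hji
      -- then i ∈ image t, so insert i image = image, card ≤ k-1 < k
      have hiimg : i ∈ Finset.image t Finset.univ := by
        rw [← hji]; exact Finset.mem_image_of_mem _ (Finset.mem_univ a)
      have h1 : insert i (Finset.image t Finset.univ) = Finset.image t Finset.univ :=
        Finset.insert_eq_self.mpr hiimg
      have h2 : (insert i (Finset.image t Finset.univ)).card ≤ k - 1 := by
        rw [h1]; exact le_trans (Finset.card_image_le) (by simp)
      have h3 := hunif _ hmem
      omega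
  · exact absurd (if_neg hmem) hne
end

section
variable {n : ℕ} {arc : Fin n → Fin n → Prop} {σ : Fin n → Fin n}

lemma exists_circuit_iter (hn : 0 < n) (harc : ∀ i, arc i (σ i)) (i0 : Fin n) :
    ∃ (p : ℕ) (γ : ℕ → Fin n), IsCircuit arc p γ ∧ ∃ a, ∀ j, γ j = σ^[a + j] i0 := by
  have hni : ¬ Function.Injective (fun m : Fin (n+1) => σ^[(m : ℕ)] i0) := by
    intro hinj
    have := Fintype.card_le_of_injective _ hinj
    simp at this
  rw [Function.not_injective_iff] at hni
  obtain ⟨a, b, hab, hne⟩ := hni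
  have key : ∀ (ca cb : ℕ), ca < cb → σ^[ca] i0 = σ^[cb] i0 →
      ∃ (p : ℕ) (γ : ℕ → Fin n), IsCircuit arc p γ ∧ ∃ a, ∀ j, γ j = σ^[a + j] i0 := by
    intro ca cb hlt heq
    refine ⟨cb - ca, fun j => σ^[ca + j] i0, ⟨by omega, ?_, ?_⟩, ⟨ca, fun j => rfl⟩⟩
    · simp only [add_zero]
      rw [show ca + (cb - ca) = cb by omega]
      exact heq.symm
    · intro j _
      show arc (σ^[ca + j] i0) (σ^[ca + (j+1)] i0)
      rw [show ca + (j + 1) = (ca + j) + 1 by omega, Function.iterate_succ_apply']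
      exact harc _
  have hne' : (a : ℕ) ≠ (b : ℕ) := fun h => hne (Fin.ext h)
  rcases hne'.lt_or_gt with hlt | hlt
  · exact key _ _ hlt hab
  · exact key _ _ hlt hab.symm

/-- Upper-bound walk: from the chain inequalities deduce `c^p ≤ ∏ d`. -/
lemma circuit_pow_le (hn : 0 < n) (d w : Fin n → ℝ) (c : ℝ) (hc : 0 < c)
    (hw : ∀ i, 0 ≤ w i) (hd : ∀ i, 0 ≤ d i)
    (harc : ∀ i, arc i (σ i))
    (hstep : ∀ i, c * w i ≤ d i * w (σ i))
    (i0 : Fin n) (h0 : 0 < w i0) :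
    ∃ (p : ℕ) (γ : ℕ → Fin n), IsCircuit arc p γ ∧
      c ^ p ≤ ∏ j ∈ Finset.range p, d (γ j) := by
  have hpos : ∀ m, 0 < w (σ^[m] i0) := by
    intro m
    induction m with
    | zero => exact h0
    | succ m ih =>
      rw [Function.iterate_succ_apply']
      by_contra hle
      push_neg at hle
      have h1 : c * w (σ^[m] i0) ≤ d (σ^[m] i0) * w (σ (σ^[m] i0)) := hstep _
      have h2 : d (σ^[m] i0) * w (σ (σ^[m] i0)) ≤ 0 :=
        mul_nonpos_of_nonneg_of_nonpos (hd _) hle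
      nlinarith
  obtain ⟨p, γ, hcirc, a, hγ⟩ := exists_circuit_iter hn harc i0
  refine ⟨p, γ, hcirc, ?_⟩
  have hwpos : ∀ j, 0 < w (γ j) := fun j => by rw [hγ j]; exact hpos _
  have hprod : ∏ j ∈ Finset.range p, (c * w (γ j)) ≤
      ∏ j ∈ Finset.range p, (d (γ j) * w (γ (j+1))) := by
    apply Finset.prod_le_prod
    · intro j _; exact mul_nonneg (le_of_lt hc) (hw _)
    · intro j hj
      have : γ (j+1) = σ (γ j) := by
        rw [hγ, hγ, show a + (j+1) = (a+j)+1 by omega, Function.iterate_succ_apply']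
      rw [this]; exact hstep _
  have hshift : ∏ j ∈ Finset.range p, w (γ (j+1)) = ∏ j ∈ Finset.range p, w (γ j) := by
    have h1 := Finset.prod_range_succ (fun j => w (γ j)) p
    have h2 := Finset.prod_range_succ' (fun j => w (γ j)) p
    have hw0 : w (γ 0) ≠ 0 := ne_of_gt (hwpos 0)
    have h3 : (∏ j ∈ Finset.range p, w (γ (j+1))) * w (γ 0)
        = (∏ j ∈ Finset.range p, w (γ j)) * w (γ 0) := by
      rw [← h2, h1, hcirc.2.1]
    exact mul_right_cancel₀ hw0 h3
  rw [Finset.prod_mul_distrib, Finset.prod_mul_distrib, Finset.prod_const, Finset.card_range, hshift] at hprod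
  have hWpos : 0 < ∏ j ∈ Finset.range p, w (γ j) := Finset.prod_pos (fun j _ => hwpos j)
  exact le_of_mul_le_mul_right hprod hWpos

/-- Lower-bound walk: from the chain inequalities deduce `∏ d ≤ c^p`. -/
lemma circuit_le_pow (hn : 0 < n) (d w : Fin n → ℝ) (c : ℝ)
    (hw : ∀ i, 0 < w i) (hd : ∀ i, 0 ≤ d i)
    (harc : ∀ i, arc i (σ i))
    (hstep : ∀ i, d i * w (σ i) ≤ c * w i) (i0 : Fin n) :
    ∃ (p : ℕ) (γ : ℕ → Fin n), IsCircuit arc p γ ∧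
      ∏ j ∈ Finset.range p, d (γ j) ≤ c ^ p := by
  obtain ⟨p, γ, hcirc, a, hγ⟩ := exists_circuit_iter hn harc i0
  refine ⟨p, γ, hcirc, ?_⟩
  have hprod : ∏ j ∈ Finset.range p, (d (γ j) * w (γ (j+1))) ≤
      ∏ j ∈ Finset.range p, (c * w (γ j)) := by
    apply Finset.prod_le_prod
    · intro j _
      exact mul_nonneg (hd _) (le_of_lt (hw _))
    · intro j hj
      have : γ (j+1) = σ (γ j) := by
        rw [hγ, hγ, show a + (j+1) = (a+j)+1 by omega, Function.iterate_succ_apply']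
      rw [this]; exact hstep _
  have hshift : ∏ j ∈ Finset.range p, w (γ (j+1)) = ∏ j ∈ Finset.range p, w (γ j) := by
    have h1 := Finset.prod_range_succ (fun j => w (γ j)) p
    have h2 := Finset.prod_range_succ' (fun j => w (γ j)) p
    have hw0 : w (γ 0) ≠ 0 := ne_of_gt (hw _)
    have h3 : (∏ j ∈ Finset.range p, w (γ (j+1))) * w (γ 0)
        = (∏ j ∈ Finset.range p, w (γ j)) * w (γ 0) := by
      rw [← h2, h1, hcirc.2.1]
    exact mul_right_cancel₀ hw0 h3
  rw [Finset.prod_mul_distrib, Finset.prod_mul_distrib, Finset.prod_const, Finset.card_range, hshift] at hprod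
  have hWpos : 0 < ∏ j ∈ Finset.range p, w (γ j) := Finset.prod_pos (fun j _ => hw _)
  exact le_of_mul_le_mul_right hprod hWpos

end

/-- rpow conversion: from `c^p ≤ P` conclude `c ≤ P^(1/p)`. -/
lemma le_rpow_of_pow_le {c P : ℝ} {p : ℕ} (hp : 0 < p) (hc : 0 ≤ c) (h : c ^ p ≤ P) :
    c ≤ P ^ ((p : ℝ)⁻¹) := by
  have h0 : (0:ℝ) ≤ c ^ p := pow_nonneg hc p
  have h1 : (c ^ p) ^ ((p:ℝ)⁻¹) ≤ P ^ ((p:ℝ)⁻¹) :=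
    Real.rpow_le_rpow h0 h (by positivity)
  rwa [← Real.rpow_natCast c p, ← Real.rpow_mul hc, mul_inv_cancel₀ (by positivity), 
    Real.rpow_one] at h1

lemma rpow_le_of_le_pow {c P : ℝ} {p : ℕ} (hp : 0 < p) (hc : 0 ≤ c) (hP : 0 ≤ P)
    (h : P ≤ c ^ p) : P ^ ((p : ℝ)⁻¹) ≤ c := by
  have h1 : P ^ ((p:ℝ)⁻¹) ≤ (c ^ p) ^ ((p:ℝ)⁻¹) :=
    Real.rpow_le_rpow hP h (by positivity)
  rwa [← Real.rpow_natCast c p, ← Real.rpow_mul hc, mul_inv_cancel₀ (by positivity),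
    Real.rpow_one] at h1

lemma perron_pair {k n : ℕ} (hk : 2 ≤ k) (hn : 0 < n)
    (E : Finset (Finset (Fin n))) (hE : E.Nonempty) (hunif : ∀ e ∈ E, e.card = k)
    (hconn : HConnected n E) :
    ∃ (lam : ℝ) (x : Fin n → ℝ), 0 < lam ∧ (∀ v, 0 < x v) ∧
      ∀ i, ∑ e ∈ E.filter (fun e => i ∈ e), ∏ v ∈ e.erase i, x v = lam * x i ^ (k-1) := by
  classical
  have hk0 : k ≠ 0 := by omega
  have hkR : ((k:ℝ)) ≠ 0 := Nat.cast_ne_zero.mpr hk0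
  set F : (Fin n → ℝ) → ℝ := fun y => ∑ e ∈ E, ∏ v ∈ e, y v with hF
  set K : Set (Fin n → ℝ) := {y | (∀ v, 0 ≤ y v) ∧ ∑ v, (y v)^k = 1} with hK
  have hKclosed : IsClosed K := by
    have h1 : IsClosed {y : Fin n → ℝ | ∀ v, 0 ≤ y v} := by
      have heq : {y : Fin n → ℝ | ∀ v, 0 ≤ y v}
          = ⋂ v, {y : Fin n → ℝ | (fun _ => (0:ℝ)) y ≤ y v} := by
        ext y; simp
      rw [heq]
      exact isClosed_iInter (fun v => isClosed_le continuous_const (continuous_apply v))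
    have h2 : IsClosed {y : Fin n → ℝ | ∑ v, (y v)^k = 1} :=
      isClosed_eq (continuous_finset_sum _ (fun v _ => (continuous_apply v).pow k))
        continuous_const
    exact h1.inter h2
  have hKbdd : Bornology.IsBounded K := by
    rw [Metric.isBounded_iff_subset_closedBall 0]
    refine ⟨1, fun y hy => ?_⟩
    obtain ⟨hy1, hy2⟩ := hy
    rw [mem_closedBall_zero_iff, pi_norm_le_iff_of_nonneg zero_le_one]
    intro v
    rw [Real.norm_eq_abs, abs_of_nonneg (hy1 v)]
    by_contra hgt
    push_neg at hgt
    have h3 : (1:ℝ) < y v ^ k := one_lt_pow₀ hgt hk0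
    have h4 : y v ^ k ≤ ∑ w, y w ^ k :=
      Finset.single_le_sum (fun w _ => pow_nonneg (hy1 w) k) (Finset.mem_univ v)
    rw [hy2] at h4
    linarith
  have hKcompact : IsCompact K := Metric.isCompact_of_isClosed_isBounded hKclosed hKbdd
  have hKne : K.Nonempty := by
    refine ⟨fun v => if v = ⟨0, hn⟩ then 1 else 0, fun v => by positivity, ?_⟩
    rw [Finset.sum_congr rfl (fun v _ => show ((if v = ⟨0,hn⟩ then (1:ℝ) else 0))^k
      = if v = ⟨0,hn⟩ then 1 else 0 by split_ifs <;> simp [hk0])]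
    simp
  have hFcont : Continuous F :=
    continuous_finset_sum _ (fun e _ => continuous_finset_prod _ (fun v _ => continuous_apply v))
  obtain ⟨x, hxK, hxmax⟩ := hKcompact.exists_isMaxOn hKne hFcont.continuousOn
  obtain ⟨hxnn, hxsum⟩ := hxK
  have hmax : ∀ y ∈ K, F y ≤ F x := fun y hy => hxmax hy
  -- scaling inequality
  have hscale : ∀ y : Fin n → ℝ, (∀ v, 0 ≤ y v) → 0 < ∑ v, (y v)^k →
      F y ≤ F x * ∑ v, (y v)^k := by
    intro y hy hG
    set g := ∑ v, (y v)^k with hg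
    set cc : ℝ := g ^ (-(k:ℝ)⁻¹) with hcc
    have hcpos : 0 < cc := Real.rpow_pos_of_pos hG _
    have hck : cc ^ k = g⁻¹ := by
      rw [hcc, ← Real.rpow_natCast (g ^ (-(k:ℝ)⁻¹)) k, ← Real.rpow_mul (le_of_lt hG),
        neg_mul, inv_mul_cancel₀ hkR, Real.rpow_neg_one]
    have hzK : (fun v => cc * y v) ∈ K := by
      constructor
      · intro v; exact mul_nonneg (le_of_lt hcpos) (hy v)
      · have : ∀ v, (cc * y v)^k = cc^k * (y v)^k := fun v => mul_pow cc (y v) k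
        rw [Finset.sum_congr rfl (fun v _ => this v), ← Finset.mul_sum, ← hg, hck,
          inv_mul_cancel₀ (ne_of_gt hG)]
    have hFz : F (fun v => cc * y v) = cc^k * F y := by
      rw [hF]
      simp only
      rw [Finset.mul_sum]
      refine Finset.sum_congr rfl (fun e he => ?_)
      rw [Finset.prod_mul_distrib, Finset.prod_const, hunif e he]
    have h5 := hmax _ hzK
    rw [hFz, hck] at h5
    calc F y = g * (g⁻¹ * F y) := by field_simp
    _ ≤ g * F x := by
        apply mul_le_mul_of_nonneg_left h5 (le_of_lt hG)
    _ = F x * g := mul_comm _ _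
  have hFnn : 0 ≤ F x := by
    apply Finset.sum_nonneg
    intro e he
    exact Finset.prod_nonneg (fun v _ => hxnn v)
  -- positivity of the maximizer
  have hxpos : ∀ v, 0 < x v := by
    by_contra hcon
    push_neg at hcon
    obtain ⟨u, hu⟩ := hcon
    have hu0 : x u = 0 := le_antisymm hu (hxnn u)
    -- some positive coordinate
    have hpos_ex : ∃ s, 0 < x s := by
      by_contra hall
      push_neg at hall
      have : ∀ v, x v = 0 := fun v => le_antisymm (hall v) (hxnn v)
      rw [Finset.sum_congr rfl (fun v _ => by rw [this v, zero_pow hk0])] at hxsum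
      simp at hxsum
    obtain ⟨s, hs⟩ := hpos_ex
    -- mixed edge exists
    have hmixed : ∃ e₀ ∈ E, (∃ a ∈ e₀, 0 < x a) ∧ ∃ b ∈ e₀, x b = 0 := by
      by_contra hpure
      push_neg at hpure
      -- propagate positivity along connectivity
      have hprop : ∀ w, Relation.ReflTransGen (fun u v => ∃ e ∈ E, u ∈ e ∧ v ∈ e) s w →
          0 < x w := by
        intro w hrt
        induction hrt with
        | refl => exact hs
        | tail hst hr ih =>
          obtain ⟨e, heE, hce, hue⟩ := hr
          have hpa : ∃ a ∈ e, 0 < x a := ⟨_, hce, ih⟩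
          have hnz := hpure e heE hpa
          rcases lt_or_eq_of_le (hxnn _) with h | h
          · exact h
          · exact absurd h.symm (hnz _ hue)
      exact absurd hu0 (ne_of_gt (hprop u (hconn s u)))
    obtain ⟨e₀, he₀E, ⟨a, hae, ha⟩, ⟨b, hbe, hb⟩⟩ := hmixed
    set Z : Finset (Fin n) := e₀.filter (fun v => x v = 0) with hZ
    have hZsub : Z ⊆ e₀ := Finset.filter_subset _ _
    have hbZ : b ∈ Z := Finset.mem_filter.mpr ⟨hbe, hb⟩
    have haZ : a ∉ Z := fun h => absurd (Finset.mem_filter.mp h).2 (ne_of_gt ha)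
    set m := Z.card with hm
    have hm1 : 1 ≤ m := Finset.card_pos.mpr ⟨b, hbZ⟩
    have hmk : m + 1 ≤ k := by
      have hss : Z ⊂ e₀ := Finset.ssubset_iff_of_subset hZsub |>.mpr ⟨a, hae, haZ⟩
      have := Finset.card_lt_card hss
      rw [hunif e₀ he₀E] at this
      omega
    set c₀ : ℝ := ∏ v ∈ e₀ \ Z, x v with hc₀def
    have hc₀ : 0 < c₀ := by
      apply Finset.prod_pos
      intro v hv
      rw [Finset.mem_sdiff] at hv
      rcases lt_or_eq_of_le (hxnn v) with h | h
      · exact h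
      · exact absurd (Finset.mem_filter.mpr ⟨hv.1, h.symm⟩) hv.2
    -- the contradiction via perturbation
    set ε : ℝ := min 1 (c₀ / (F x * m + 1)) with hε
    have hεpos : 0 < ε := by
      apply lt_min one_pos
      apply div_pos hc₀
      have h0m : 0 ≤ F x * m := mul_nonneg hFnn (Nat.cast_nonneg m)
      linarith
    have hε1 : ε ≤ 1 := min_le_left _ _
    set y : Fin n → ℝ := fun v => x v + if v ∈ Z then ε else 0 with hy
    have hynn : ∀ v, 0 ≤ y v := by
      intro v
      show (0:ℝ) ≤ x v + if v ∈ Z then ε else 0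
      have : (0:ℝ) ≤ if v ∈ Z then ε else 0 := by
        split_ifs
        · exact hεpos.le
        · exact le_rfl
      linarith [hxnn v]
    have hyG : ∑ v, (y v)^k = 1 + m * ε^k := by
      have hpt : ∀ v, (y v)^k = (x v)^k + (if v ∈ Z then ε^k else 0) := by
        intro v
        by_cases hvZ : v ∈ Z
        · have hxv : x v = 0 := (Finset.mem_filter.mp hvZ).2
          rw [hy]
          simp only [if_pos hvZ, hxv, zero_add, zero_pow hk0]
        · rw [hy]
          simp only [if_neg hvZ, add_zero]
      rw [Finset.sum_congr rfl (fun v _ => hpt v), Finset.sum_add_distrib, hxsum,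
        Finset.sum_ite_mem, Finset.univ_inter, Finset.sum_const, nsmul_eq_mul]
    have hyGpos : 0 < ∑ v, (y v)^k := by
      rw [hyG]
      have : 0 ≤ (m:ℝ) * ε^k := mul_nonneg (Nat.cast_nonneg m) (pow_nonneg hεpos.le k)
      linarith
    have hyF : F x + c₀ * ε^m ≤ F y := by
      have he₀y : ∏ v ∈ e₀, y v = c₀ * ε^m := by
        rw [← Finset.prod_sdiff hZsub]
        have h1 : ∏ v ∈ Z, y v = ε^m := by
          rw [Finset.prod_congr rfl (fun v hv => show y v = ε by
            rw [hy]; simp only [if_pos hv, (Finset.mem_filter.mp hv).2, zero_add]),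
            Finset.prod_const, hm]
        have h2 : ∏ v ∈ e₀ \ Z, y v = c₀ := by
          rw [hc₀def]
          refine Finset.prod_congr rfl (fun v hv => ?_)
          rw [Finset.mem_sdiff] at hv
          rw [hy]; simp only [if_neg hv.2, add_zero]
        rw [h1, h2]
      have he₀x : ∏ v ∈ e₀, x v = 0 := Finset.prod_eq_zero hbe hb
      have hrest : ∑ e ∈ E.erase e₀, ∏ v ∈ e, x v ≤ ∑ e ∈ E.erase e₀, ∏ v ∈ e, y v := by
        apply Finset.sum_le_sum
        intro e he
        apply Finset.prod_le_prod (fun v _ => hxnn v)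
        intro v _
        show x v ≤ x v + if v ∈ Z then ε else 0
        have : (0:ℝ) ≤ if v ∈ Z then ε else 0 := by
          split_ifs
          · exact hεpos.le
          · exact le_rfl
        linarith
      have hFx' : F x = 0 + ∑ e ∈ E.erase e₀, ∏ v ∈ e, x v := by
        rw [hF]; simp only; rw [← Finset.add_sum_erase E _ he₀E, he₀x]
      have hFy' : F y = c₀ * ε^m + ∑ e ∈ E.erase e₀, ∏ v ∈ e, y v := by
        rw [hF]; simp only; rw [← Finset.add_sum_erase E _ he₀E, he₀y]
      rw [hFx', hFy']
      linarith
    have hcontra := hscale y hynn hyGpos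
    rw [hyG] at hcontra
    -- F x + c₀ ε^m ≤ F y ≤ F x (1 + m ε^k)  ⇒  c₀ ε^m ≤ F x m ε^k
    have h6 : c₀ * ε^m ≤ F x * m * ε^k := by nlinarith
    have h7 : ε^k ≤ ε * ε^m := by
      calc ε^k ≤ ε^(m+1) := pow_le_pow_of_le_one (le_of_lt hεpos) hε1 hmk
      _ = ε * ε^m := by ring
    have h8 : F x * m * ε^k ≤ F x * m * (ε * ε^m) := by
      apply mul_le_mul_of_nonneg_left h7
      exact mul_nonneg hFnn (Nat.cast_nonneg m)
    have hεm : 0 < ε^m := pow_pos hεpos m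
    have h9 : c₀ ≤ F x * m * ε := by
      have := le_trans h6 h8
      have h10 : c₀ * ε^m ≤ (F x * m * ε) * ε^m := by nlinarith
      exact le_of_mul_le_mul_right h10 hεm
    have hεle : ε ≤ c₀ / (F x * m + 1) := min_le_right _ _
    have h11 : F x * m * ε ≤ F x * m * (c₀ / (F x * m + 1)) := by
      apply mul_le_mul_of_nonneg_left hεle
      exact mul_nonneg hFnn (Nat.cast_nonneg m)
    have h12 : F x * m * (c₀ / (F x * m + 1)) < c₀ := by
      have hpos : 0 < F x * m + 1 := by
        have := mul_nonneg hFnn (Nat.cast_nonneg m); linarith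
      rw [← mul_div_assoc, div_lt_iff₀ hpos]
      nlinarith
    linarith
  -- positivity of the maximum value
  have hFpos : 0 < F x := by
    obtain ⟨e', he'⟩ := hE
    set cc : ℝ := ((k:ℝ)⁻¹) ^ ((k:ℝ)⁻¹) with hccdef
    have hkpos : (0:ℝ) < (k:ℝ) := by positivity
    have hccpos : 0 < cc := Real.rpow_pos_of_pos (inv_pos.mpr hkpos) _
    have hcck : cc ^ k = (k:ℝ)⁻¹ := by
      rw [hccdef, ← Real.rpow_natCast (((k:ℝ)⁻¹) ^ ((k:ℝ)⁻¹)) k,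
        ← Real.rpow_mul (le_of_lt (inv_pos.mpr hkpos)), inv_mul_cancel₀ hkR, Real.rpow_one]
    set z : Fin n → ℝ := fun v => if v ∈ e' then cc else 0 with hz
    have hzK : z ∈ K := by
      constructor
      · intro v
        show (0:ℝ) ≤ if v ∈ e' then cc else 0
        split_ifs
        · exact hccpos.le
        · exact le_rfl
      · show ∑ v, (if v ∈ e' then cc else 0)^k = 1
        have hpt : ∀ v : Fin n, (if v ∈ e' then cc else 0)^k
            = if v ∈ e' then cc^k else 0 := by
          intro v; split_ifs
          · rfl
          · exact zero_pow hk0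
        rw [Finset.sum_congr rfl (fun v _ => hpt v), Finset.sum_ite_mem, Finset.univ_inter,
          Finset.sum_const, nsmul_eq_mul, hunif e' he', hcck, mul_inv_cancel₀ hkR]
    have hzprod : ∏ v ∈ e', z v = (k:ℝ)⁻¹ := by
      rw [Finset.prod_congr rfl (fun v hv => show z v = cc by
        rw [hz]; exact if_pos hv), Finset.prod_const, hunif e' he', hcck]
    have hFz : (k:ℝ)⁻¹ ≤ F z := by
      rw [← hzprod, hF]
      apply Finset.single_le_sum _ he'
      intro e he
      apply Finset.prod_nonneg
      intro v _
      show (0:ℝ) ≤ if v ∈ e' then cc else 0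
      split_ifs
      · exact hccpos.le
      · exact le_rfl
    have := hmax z hzK
    calc (0:ℝ) < (k:ℝ)⁻¹ := inv_pos.mpr hkpos
    _ ≤ F z := hFz
    _ ≤ F x := this
  -- the eigenvalue equation via one-variable calculus
  have heig : ∀ i, ∑ e ∈ E.filter (fun e => i ∈ e), ∏ v ∈ e.erase i, x v
      = ((k:ℝ) * F x) * x i ^ (k-1) := by
    intro i
    set A : ℝ := ∑ e ∈ E.filter (fun e => ¬ i ∈ e), ∏ v ∈ e, x v with hA
    set B : ℝ := ∑ e ∈ E.filter (fun e => i ∈ e), ∏ v ∈ e.erase i, x v with hB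
    set D : ℝ := ∑ v ∈ Finset.univ.erase i, x v ^ k with hD
    have hD1 : D + x i ^ k = 1 := by
      rw [hD, add_comm]
      exact (Finset.add_sum_erase Finset.univ (fun v => x v ^ k)
        (Finset.mem_univ i)).trans hxsum
    set φ : ℝ → ℝ := fun t => (A + B * (x i + t)) / (D + (x i + t)^k) with hφ
    have hupdF : ∀ t : ℝ, F (Function.update x i (x i + t)) = A + B * (x i + t) := by
      intro t
      set y := Function.update x i (x i + t) with hydef
      have hyi : y i = x i + t := Function.update_self i _ x
      have hyv : ∀ v, v ≠ i → y v = x v := fun v hv => Function.update_of_ne hv _ x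
      rw [hF]
      show ∑ e ∈ E, ∏ v ∈ e, y v = A + B * (x i + t)
      rw [← Finset.sum_filter_add_sum_filter_not E (fun e => i ∈ e)]
      have hpart1 : ∑ e ∈ E.filter (fun e => i ∈ e), ∏ v ∈ e, y v = (x i + t) * B := by
        rw [hB, Finset.mul_sum]
        refine Finset.sum_congr rfl (fun e he => ?_)
        have hie : i ∈ e := (Finset.mem_filter.mp he).2
        rw [← Finset.mul_prod_erase e y hie, hyi]
        congr 1
        refine Finset.prod_congr rfl (fun v hv => ?_)
        exact hyv v (Finset.mem_erase.mp hv).1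
      have hpart2 : ∑ e ∈ E.filter (fun e => ¬ i ∈ e), ∏ v ∈ e, y v = A := by
        rw [hA]
        refine Finset.sum_congr rfl (fun e he => ?_)
        have hie : i ∉ e := (Finset.mem_filter.mp he).2
        refine Finset.prod_congr rfl (fun v hv => ?_)
        exact hyv v (fun h => hie (h ▸ hv))
      rw [hpart1, hpart2]
      ring
    have hupdG : ∀ t : ℝ, ∑ v, (Function.update x i (x i + t) v)^k = D + (x i + t)^k := by
      intro t
      set y := Function.update x i (x i + t) with hydef
      have hyi : y i = x i + t := Function.update_self i _ x
      have hyv : ∀ v, v ≠ i → y v = x v := fun v hv => Function.update_of_ne hv _ x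
      rw [← Finset.add_sum_erase _ _ (Finset.mem_univ i), hyi, hD, add_comm]
      congr 1
      refine Finset.sum_congr rfl (fun v hv => ?_)
      rw [hyv v (Finset.mem_erase.mp hv).1]
    have hAB : A + B * x i = F x := by
      have h := hupdF 0
      rw [add_zero, Function.update_eq_self] at h
      rw [← h]
    have hφ0 : φ 0 = F x := by
      show (A + B * (x i + 0)) / (D + (x i + 0)^k) = F x
      rw [add_zero, hD1, div_one, hAB]
    have hlocmax : IsLocalMax φ 0 := by
      have hball : Metric.ball (0:ℝ) (x i) ∈ nhds 0 := Metric.ball_mem_nhds 0 (hxpos i)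
      filter_upwards [hball] with t ht
      rw [Metric.mem_ball, Real.dist_eq, sub_zero] at ht
      have hxit : 0 < x i + t := by
        rcases abs_lt.mp ht with ⟨h1, h2⟩
        linarith
      set y := Function.update x i (x i + t) with hydef
      have hynn : ∀ v, 0 ≤ y v := by
        intro v
        rcases eq_or_ne v i with rfl | hv
        · exact le_trans hxit.le (le_of_eq (Function.update_self v _ x).symm)
        · exact le_trans (hxnn v) (le_of_eq (Function.update_of_ne hv _ x).symm)
      have hDnn : 0 ≤ D := Finset.sum_nonneg (fun v _ => pow_nonneg (hxnn v) k)
      have hGpos : 0 < ∑ v, (y v)^k := by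
        rw [hupdG t]
        have := pow_pos hxit k
        linarith
      have hle := hscale y hynn hGpos
      show φ t ≤ φ 0
      rw [hφ0]
      show (A + B * (x i + t)) / (D + (x i + t)^k) ≤ F x
      rw [← hupdF t, ← hupdG t, div_le_iff₀ hGpos]
      exact hle
    have h1 : HasDerivAt (fun t : ℝ => x i + t) 1 0 := by
      simpa using (hasDerivAt_id (0:ℝ)).const_add (x i)
    have hnum : HasDerivAt (fun t : ℝ => A + B * (x i + t)) B 0 := by
      simpa using ((h1.const_mul B).const_add A)
    have hden : HasDerivAt (fun t : ℝ => D + (x i + t)^k) ((k:ℝ) * x i ^ (k-1)) 0 := by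
      have h2 := (h1.pow k).const_add D
      simpa using h2
    have hd0 : D + (x i + 0)^k ≠ 0 := by
      rw [add_zero, hD1]; exact one_ne_zero
    have hdiv := hnum.div hden hd0
    simp only [add_zero] at hdiv
    rw [hD1] at hdiv
    simp only [one_pow, div_one] at hdiv
    have hder0 : B * 1 - (A + B * x i) * ((k:ℝ) * x i ^ (k-1)) = 0 := by
      have h3 : deriv φ 0 = 0 := hlocmax.deriv_eq_zero
      rw [← hdiv.deriv]
      exact h3
    rw [mul_one, hAB] at hder0
    linear_combination hder0
  exact ⟨(k:ℝ) * F x, x, by positivity, hxpos, heig⟩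

theorem stmt10 (k n : ℕ) (hk : 2 ≤ k) (hn : 0 < n)
    (E : Finset (Finset (Fin n))) (hunif : ∀ e ∈ E, e.card = k)
    (hconn : HConnected n E) :
    sInf {r : ℝ | ∃ (p : ℕ) (γ : ℕ → Fin n), IsCircuit (tArc k n (adjT k n E)) p γ ∧
        r = (∏ j ∈ Finset.range p, (deg n E (γ j) : ℝ)) ^ ((p : ℝ)⁻¹)}
      ≤ specRad k n (adjT k n E) ∧
    specRad k n (adjT k n E) ≤
      sSup {r : ℝ | ∃ (p : ℕ) (γ : ℕ → Fin n), IsCircuit (tArc k n (adjT k n E)) p γ ∧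
        r = (∏ j ∈ Finset.range p, (deg n E (γ j) : ℝ)) ^ ((p : ℝ)⁻¹)} := by
  classical
  by_cases hE : E.Nonempty
  case neg =>
    rw [Finset.not_nonempty_iff_eq_empty] at hE
    subst hE
    have hnoarc : ∀ i j : Fin n, ¬ tArc k n (adjT k n (∅ : Finset (Finset (Fin n)))) i j := by
      rintro i j ⟨t, hne, -⟩
      exact hne (by simp [adjT])
    have hcirc : {r : ℝ | ∃ (p : ℕ) (γ : ℕ → Fin n),
        IsCircuit (tArc k n (adjT k n (∅ : Finset (Finset (Fin n))))) p γ ∧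
        r = (∏ j ∈ Finset.range p, (deg n ∅ (γ j) : ℝ)) ^ ((p : ℝ)⁻¹)} = ∅ := by
      rw [Set.eq_empty_iff_forall_notMem]
      rintro r ⟨p, γ, ⟨hp, -, harc⟩, -⟩
      exact hnoarc _ _ (harc 0 hp)
    have heig : {r : ℝ | ∃ lam : ℂ,
        IsEig k n (adjT k n (∅ : Finset (Finset (Fin n)))) lam ∧ ‖lam‖ = r}
        = {0} := by
      ext r
      simp only [Set.mem_setOf_eq, Set.mem_singleton_iff]
      constructor
      · rintro ⟨lam, ⟨x, hx0, hx⟩, rfl⟩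
        obtain ⟨i, hi⟩ := Function.ne_iff.mp hx0
        have h1 := hx i
        rw [Finset.sum_congr rfl (fun t _ =>
          show ((adjT k n (∅ : Finset (Finset (Fin n))) i t : ℝ) : ℂ) * ∏ j, x (t j) = 0 by
            simp [adjT]), Finset.sum_const_zero] at h1
        have h3 : lam = 0 := by
          rcases mul_eq_zero.mp h1.symm with h | h
          · exact h
          · exact absurd ((pow_eq_zero_iff (by omega : k - 1 ≠ 0)).mp h) hi
        simp [h3]
      · rintro rfl
        refine ⟨0, ⟨fun _ => 1, ?_, ?_⟩, norm_zero⟩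
        · intro hcon
          have := congrFun hcon ⟨0, hn⟩
          simp at this
        · intro i
          simp [adjT]
    constructor
    · rw [hcirc, Real.sInf_empty]
      show (0:ℝ) ≤ sSup {r : ℝ | ∃ lam : ℂ,
        IsEig k n (adjT k n (∅ : Finset (Finset (Fin n)))) lam ∧ ‖lam‖ = r}
      rw [heig, csSup_singleton]
    · rw [hcirc, Real.sSup_empty]
      show sSup {r : ℝ | ∃ lam : ℂ,
        IsEig k n (adjT k n (∅ : Finset (Finset (Fin n)))) lam ∧ ‖lam‖ = r} ≤ 0
      rw [heig, csSup_singleton]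
  case pos =>
    obtain ⟨e₀, he₀⟩ := hE
    have hE : E.Nonempty := ⟨e₀, he₀⟩
    have hkn : k ≤ n := by
      have h1 := Finset.card_le_univ e₀
      rw [hunif e₀ he₀] at h1
      simpa using h1
    have hedge : ∀ i : Fin n, ∃ e ∈ E, i ∈ e := by
      intro i
      have hne : (Finset.univ.erase i).Nonempty := by
        rw [← Finset.card_pos, Finset.card_erase_of_mem (Finset.mem_univ i),
          Finset.card_univ, Fintype.card_fin]
        omega
      obtain ⟨j, hj⟩ := hne
      have hji : j ≠ i := (Finset.mem_erase.mp hj).1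
      rcases Relation.ReflTransGen.cases_head (hconn i j) with h | ⟨c, ⟨e, heE, hie, -⟩, -⟩
      · exact absurd h.symm hji
      · exact ⟨e, heE, hie⟩
    have hdegE : ∀ i, (deg n E i : ℝ) ≤ (E.card : ℝ) :=
      fun i => Nat.cast_le.mpr (Finset.card_le_card (Finset.filter_subset _ _))
    have harcne : ∀ i : Fin n, ∃ j, tArc k n (adjT k n E) i j := by
      intro i
      obtain ⟨e, he, hie⟩ := hedge i
      have hne : (e.erase i).Nonempty := by
        rw [← Finset.card_pos, Finset.card_erase_of_mem hie, hunif e he]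
        omega
      obtain ⟨j, hj⟩ := hne
      exact ⟨j, arc_of_edge hk E hunif he hie (Finset.mem_erase.mp hj).2
        (Finset.mem_erase.mp hj).1⟩
    have hadj_nn : ∀ i t, 0 ≤ adjT k n E i t := by
      intro i t
      rw [adjT]
      split_ifs
      · positivity
      · exact le_rfl
    have circBddB : BddBelow {r : ℝ | ∃ (p : ℕ) (γ : ℕ → Fin n),
        IsCircuit (tArc k n (adjT k n E)) p γ ∧
        r = (∏ j ∈ Finset.range p, (deg n E (γ j) : ℝ)) ^ ((p : ℝ)⁻¹)} := by
      refine ⟨0, ?_⟩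
      rintro r ⟨p, γ, -, rfl⟩
      exact Real.rpow_nonneg (Finset.prod_nonneg fun j _ => Nat.cast_nonneg _) _
    have circBddA : BddAbove {r : ℝ | ∃ (p : ℕ) (γ : ℕ → Fin n),
        IsCircuit (tArc k n (adjT k n E)) p γ ∧
        r = (∏ j ∈ Finset.range p, (deg n E (γ j) : ℝ)) ^ ((p : ℝ)⁻¹)} := by
      refine ⟨(E.card : ℝ), ?_⟩
      rintro r ⟨p, γ, hcirc, rfl⟩
      apply rpow_le_of_le_pow hcirc.1 (Nat.cast_nonneg _)
        (Finset.prod_nonneg fun j _ => Nat.cast_nonneg _)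
      calc ∏ j ∈ Finset.range p, (deg n E (γ j) : ℝ)
          ≤ ∏ j ∈ Finset.range p, (E.card : ℝ) :=
            Finset.prod_le_prod (fun j _ => Nat.cast_nonneg _) (fun j _ => hdegE _)
        _ = (E.card : ℝ) ^ p := by rw [Finset.prod_const, Finset.card_range]
    -- every eigenvalue modulus is at most the sup over circuits
    have eig_bound : ∀ mu : ℂ, IsEig k n (adjT k n E) mu →
        ‖mu‖ ≤ sSup {r : ℝ | ∃ (p : ℕ) (γ : ℕ → Fin n),
          IsCircuit (tArc k n (adjT k n E)) p γ ∧
          r = (∏ j ∈ Finset.range p, (deg n E (γ j) : ℝ)) ^ ((p : ℝ)⁻¹)} := by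
      rintro mu ⟨x, hx0, hx⟩
      have hσex : ∀ i : Fin n, ∃ j, tArc k n (adjT k n E) i j ∧
          ∀ j', tArc k n (adjT k n E) i j' → ‖x j'‖ ≤ ‖x j‖ := by
        intro i
        obtain ⟨j0, hj0⟩ := harcne i
        obtain ⟨j, hjmem, hjmax⟩ := Finset.exists_max_image
          (Finset.univ.filter (fun j => tArc k n (adjT k n E) i j))
          (fun j => ‖x j‖)
          ⟨j0, Finset.mem_filter.mpr ⟨Finset.mem_univ _, hj0⟩⟩
        exact ⟨j, (Finset.mem_filter.mp hjmem).2,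
          fun j' hj' => hjmax j' (Finset.mem_filter.mpr ⟨Finset.mem_univ _, hj'⟩)⟩
      choose σ hσarc hσmax using hσex
      have hstep : ∀ i, ‖mu‖ * (‖x i‖)^(k-1)
          ≤ (deg n E i : ℝ) * (‖x (σ i)‖)^(k-1) := by
        intro i
        have h1 : ‖mu‖ * ‖x i‖^(k-1)
            = ‖∑ t : Fin (k-1) → Fin n,
                ((adjT k n E i t : ℝ):ℂ) * ∏ j, x (t j)‖ := by
          rw [hx i, norm_mul, norm_pow]
        rw [h1]
        calc ‖∑ t : Fin (k-1) → Fin n, ((adjT k n E i t : ℝ):ℂ) * ∏ j, x (t j)‖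
            ≤ ∑ t : Fin (k-1) → Fin n, ‖((adjT k n E i t : ℝ):ℂ) * ∏ j, x (t j)‖ :=
              norm_sum_le _ _
          _ ≤ ∑ t : Fin (k-1) → Fin n, adjT k n E i t * (‖x (σ i)‖)^(k-1) := by
              apply Finset.sum_le_sum
              intro t _
              rw [norm_mul, Complex.norm_real, Real.norm_eq_abs, abs_of_nonneg (hadj_nn i t)]
              by_cases hzero : adjT k n E i t = 0
              · rw [hzero, zero_mul, zero_mul]
              · apply mul_le_mul_of_nonneg_left _ (hadj_nn i t)
                rw [norm_prod]
                calc ∏ j, ‖x (t j)‖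
                    ≤ ∏ _j : Fin (k-1), ‖x (σ i)‖ := by
                      apply Finset.prod_le_prod (fun j _ => norm_nonneg _)
                      intro j _
                      exact hσmax i (t j) ⟨t, hzero, ⟨j, rfl⟩⟩
                  _ = (‖x (σ i)‖)^(k-1) := by
                      rw [Finset.prod_const, Finset.card_univ, Fintype.card_fin]
          _ = (deg n E i : ℝ) * (‖x (σ i)‖)^(k-1) := by
              rw [← Finset.sum_mul, adjT_slice hk E hunif i]
      obtain ⟨i0, hi0⟩ := Function.ne_iff.mp hx0
      by_cases hmu0 : ‖mu‖ = 0
      · obtain ⟨p, γ, hcircuit, -⟩ := exists_circuit_iter hn hσarc i0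
        rw [hmu0]
        exact le_trans
          (Real.rpow_nonneg (Finset.prod_nonneg fun j _ => Nat.cast_nonneg _) ((p:ℝ)⁻¹))
          (le_csSup circBddA ⟨p, γ, hcircuit, rfl⟩)
      · have hmupos : 0 < ‖mu‖ :=
          lt_of_le_of_ne (norm_nonneg _) (Ne.symm hmu0)
        obtain ⟨p, γ, hcircuit, hpow⟩ := circuit_pow_le hn
          (fun i => (deg n E i : ℝ)) (fun i => ‖x i‖^(k-1)) (‖mu‖)
          hmupos (fun i => pow_nonneg (norm_nonneg _) _)
          (fun i => Nat.cast_nonneg _) hσarc hstep i0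
          (pow_pos (norm_pos_iff.mpr hi0) _)
        exact le_trans (le_rpow_of_pow_le hcircuit.1 (norm_nonneg _) hpow)
          (le_csSup circBddA ⟨p, γ, hcircuit, rfl⟩)
    -- Perron eigenpair
    obtain ⟨lam, xp, hlam, hxp, heq⟩ := perron_pair hk hn E hE hunif hconn
    have heigC : IsEig k n (adjT k n E) (lam : ℂ) := by
      refine ⟨fun i => (xp i : ℂ), ?_, ?_⟩
      · rw [Function.ne_iff]
        refine ⟨⟨0, hn⟩, ?_⟩
        simp only [Pi.zero_apply, ne_eq, Complex.ofReal_eq_zero]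
        exact ne_of_gt (hxp _)
      · intro i
        show ∑ t : Fin (k-1) → Fin n, ((adjT k n E i t : ℝ):ℂ) * ∏ j, ((xp (t j) : ℝ) : ℂ)
          = (lam:ℂ) * ((xp i : ℝ):ℂ) ^ (k-1)
        calc ∑ t : Fin (k-1) → Fin n, ((adjT k n E i t : ℝ):ℂ) * ∏ j, ((xp (t j) : ℝ) : ℂ)
            = ∑ e ∈ E.filter (fun e => i ∈ e), ∏ v ∈ e.erase i, ((xp v : ℝ):ℂ) :=
              adjT_Ax_complex hk E hunif i (fun v => ((xp v : ℝ):ℂ))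
          _ = ((∑ e ∈ E.filter (fun e => i ∈ e), ∏ v ∈ e.erase i, xp v : ℝ) : ℂ) := by
              push_cast
              rfl
          _ = ((lam * xp i ^ (k-1) : ℝ) : ℂ) := by rw [heq i]
          _ = (lam:ℂ) * (xp i:ℂ)^(k-1) := by push_cast; rfl
    have habs : ‖(lam:ℂ)‖ = lam := by rw [Complex.norm_real, Real.norm_eq_abs, abs_of_pos hlam]
    have eigNe : Set.Nonempty {r : ℝ | ∃ mu : ℂ,
        IsEig k n (adjT k n E) mu ∧ ‖mu‖ = r} := ⟨lam, ⟨(lam:ℂ), heigC, habs⟩⟩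
    have eigBdd : BddAbove {r : ℝ | ∃ mu : ℂ,
        IsEig k n (adjT k n E) mu ∧ ‖mu‖ = r} := by
      refine ⟨sSup {r : ℝ | ∃ (p : ℕ) (γ : ℕ → Fin n),
        IsCircuit (tArc k n (adjT k n E)) p γ ∧
        r = (∏ j ∈ Finset.range p, (deg n E (γ j) : ℝ)) ^ ((p : ℝ)⁻¹)}, ?_⟩
      rintro r ⟨mu, hmu, rfl⟩
      exact eig_bound mu hmu
    -- min walk for the lower bound
    have hσex' : ∀ i : Fin n, ∃ j, tArc k n (adjT k n E) i j ∧
        ∀ j', tArc k n (adjT k n E) i j' → xp j ≤ xp j' := by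
      intro i
      obtain ⟨j0, hj0⟩ := harcne i
      obtain ⟨j, hjmem, hjmin⟩ := Finset.exists_min_image
        (Finset.univ.filter (fun j => tArc k n (adjT k n E) i j)) (fun j => xp j)
        ⟨j0, Finset.mem_filter.mpr ⟨Finset.mem_univ _, hj0⟩⟩
      exact ⟨j, (Finset.mem_filter.mp hjmem).2,
        fun j' hj' => hjmin j' (Finset.mem_filter.mpr ⟨Finset.mem_univ _, hj'⟩)⟩
    choose σ' hσ'arc hσ'min using hσex'
    have hstep' : ∀ i, (deg n E i : ℝ) * (xp (σ' i))^(k-1) ≤ lam * (xp i)^(k-1) := by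
      intro i
      rw [← heq i]
      have hdegdef : deg n E i = (E.filter (fun e => i ∈ e)).card := rfl
      calc (deg n E i : ℝ) * xp (σ' i)^(k-1)
          = ∑ _e ∈ E.filter (fun e => i ∈ e), xp (σ' i)^(k-1) := by
            rw [Finset.sum_const, nsmul_eq_mul, hdegdef]
        _ ≤ ∑ e ∈ E.filter (fun e => i ∈ e), ∏ v ∈ e.erase i, xp v := by
            apply Finset.sum_le_sum
            intro e he
            have heE := (Finset.mem_filter.mp he).1
            have hie := (Finset.mem_filter.mp he).2
            have hcard : (e.erase i).card = k - 1 := by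
              rw [Finset.card_erase_of_mem hie, hunif e heE]
            calc xp (σ' i)^(k-1) = ∏ _v ∈ e.erase i, xp (σ' i) := by
                  rw [Finset.prod_const, hcard]
              _ ≤ ∏ v ∈ e.erase i, xp v := by
                  apply Finset.prod_le_prod (fun v _ => (hxp _).le)
                  intro v hv
                  exact hσ'min i v (arc_of_edge hk E hunif heE hie
                    (Finset.mem_erase.mp hv).2 (Finset.mem_erase.mp hv).1)
    obtain ⟨p, γ, hcircuit, hpow⟩ := circuit_le_pow hn
      (fun i => (deg n E i : ℝ)) (fun i => xp i ^ (k-1)) lam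
      (fun i => pow_pos (hxp i) _) (fun i => Nat.cast_nonneg _) hσ'arc hstep' ⟨0, hn⟩
    have hr0 : (∏ j ∈ Finset.range p, (deg n E (γ j):ℝ))^((p:ℝ)⁻¹) ≤ lam :=
      rpow_le_of_le_pow hcircuit.1 hlam.le
        (Finset.prod_nonneg fun j _ => Nat.cast_nonneg _) hpow
    constructor
    · calc sInf {r : ℝ | ∃ (p : ℕ) (γ : ℕ → Fin n),
            IsCircuit (tArc k n (adjT k n E)) p γ ∧
            r = (∏ j ∈ Finset.range p, (deg n E (γ j) : ℝ)) ^ ((p : ℝ)⁻¹)}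
          ≤ (∏ j ∈ Finset.range p, (deg n E (γ j):ℝ))^((p:ℝ)⁻¹) :=
            csInf_le circBddB ⟨p, γ, hcircuit, rfl⟩
        _ ≤ lam := hr0
        _ ≤ specRad k n (adjT k n E) := by
            show lam ≤ sSup {r : ℝ | ∃ mu : ℂ,
              IsEig k n (adjT k n E) mu ∧ ‖mu‖ = r}
            exact le_csSup eigBdd ⟨(lam:ℂ), heigC, habs⟩
    · show sSup {r : ℝ | ∃ mu : ℂ, IsEig k n (adjT k n E) mu ∧ ‖mu‖ = r} ≤ _
      apply csSup_le eigNe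
      rintro r ⟨mu, hmu, rfl⟩
      exact eig_bound mu hmu
end
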